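/- arXiv:2212.06935 — 3 statements merged into one kernel-verified Lean document; each statement's English description precedes it below -/
import Mathlib

section
/- Let D > 1 be a square-free integer with D ≡ 23 (mod 24). Then in the formal power series ring ℤ⟦q⟧ one has the congruence Σ_{m,n≥1} χ₋D(n)·χ₁₂(m)·p((Dm²+1)/24)·q^{mn} ≡ Σ_{m≥1, gcd(m,6)=1} χ₋₁₂(m)·m·a_f((Dm²+1)/24)·( Σ_{n≥1, gcd(n,D)=1} χ₋D(n)·q^{mn} ) (mod 4), i.e. corresponding coefficients agree modulo 4. (Note that when gcd(m,6) = 1 and D ≡ 23 (mod 24), the quantity (Dm²+1)/24 is a non-negative integer.) -/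
/-!
STATEMENT 1: Let D > 1 be a square-free integer with D ≡ 23 (mod 24).  Then in ℤ⟦q⟧,
`Σ_{m,n≥1} χ₋D(n)·χ₁₂(m)·p((Dm²+1)/24)·q^{mn}
   ≡ Σ_{m≥1, gcd(m,6)=1} χ₋₁₂(m)·m·a_f((Dm²+1)/24)·(Σ_{n≥1, gcd(n,D)=1} χ₋D(n)·q^{mn})
   (mod 4)`,
where `a_f(k)` is the k-th coefficient of Ramanujan's third order mock theta function
`f(q) = 1 + Σ_{k≥1} q^{k²} ∏_{j=1}^{k} (1+q^j)^{-2}`.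
-/

open PowerSeries

/-- The partition function value `p((D·m²+1)/24)`, with the convention that
`p(α) := 0` when `α = (D·m²+1)/24` is not a (non-negative) integer. -/
def pVal (D m : ℕ) : ℤ :=
  if 24 ∣ D * m ^ 2 + 1 then (Fintype.card (Nat.Partition ((D * m ^ 2 + 1) / 24)) : ℤ) else 0

/-- The Kronecker character `χ₋D` of discriminant `-D` for squarefree `D ≡ 23 (mod 24)`:
the completely multiplicative function whose value at an odd prime `ℓ ∤ D` is the
Legendre symbol `(-D/ℓ)`, whose value at primes `ℓ ∣ D` is `0`, and whose value at `2`
is `1` (as `-D ≡ 1 (mod 8)`).  Since `D` is odd and `-D ≡ 1 (mod 8)`, this is exactly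
Mathlib's `jacobiSym (-D) n` (whose factor at the prime `2` is the quadratic character
of `ZMod 2`, which takes the value `1` at the odd number `-D`). -/
def chiD (D : ℕ) (n : ℕ) : ℤ := jacobiSym (-(D : ℤ)) n

/-- The Kronecker character of discriminant 12: `χ₁₂(m) = 1` if `m ≡ ±1 (mod 12)`,
`χ₁₂(m) = -1` if `m ≡ ±5 (mod 12)`, and `χ₁₂(m) = 0` otherwise. -/
def chi12 (m : ℕ) : ℤ :=
  if m % 12 = 1 ∨ m % 12 = 11 then 1
  else if m % 12 = 5 ∨ m % 12 = 7 then -1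
  else 0

/-- The Kronecker character of discriminant -12: `χ₋₁₂(m) = 1` if `m ≡ 1, 7 (mod 12)`,
`χ₋₁₂(m) = -1` if `m ≡ 5, 11 (mod 12)`, and `χ₋₁₂(m) = 0` otherwise. -/
def chiNeg12 (m : ℕ) : ℤ :=
  if m % 12 = 1 ∨ m % 12 = 7 then 1
  else if m % 12 = 5 ∨ m % 12 = 11 then -1
  else 0

/-- The inverse `(1 + q^j)⁻¹ ∈ ℤ⟦q⟧` (for `j ≥ 1` the constant term is `1`, a unit). -/
noncomputable def onePlusXInv (j : ℕ) : PowerSeries ℤ :=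
  PowerSeries.invOfUnit (1 + PowerSeries.X ^ j) 1

/-- The `k`-th summand `q^{k²} ∏_{j=1}^{k} (1+q^j)^{-2}` of the mock theta function
`f(q)`; the `k = 0` summand is the leading term `1`. -/
noncomputable def mockThetaTerm (k : ℕ) : PowerSeries ℤ :=
  PowerSeries.X ^ (k ^ 2) * ∏ j ∈ Finset.Icc 1 k, (onePlusXInv j) ^ 2

/-- Ramanujan's third order mock theta function
`f(q) = 1 + Σ_{k≥1} q^{k²} ∏_{j=1}^{k}(1+q^j)^{-2} ∈ ℤ⟦q⟧`; the sum converges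
q-adically since the `k`-th summand lies in `q^{k²}·ℤ⟦q⟧`, so the `n`-th coefficient
is the (finite) sum of the `n`-th coefficients of the summands with `k ≤ n`. -/
noncomputable def mockThetaF : PowerSeries ℤ :=
  PowerSeries.mk fun n =>
    ∑ k ∈ Finset.range (n + 1), (PowerSeries.coeff n) (mockThetaTerm k)

/-- `a_f(n)`: the `n`-th Fourier coefficient of `f(q)`. -/
noncomputable def aF (n : ℕ) : ℤ := (PowerSeries.coeff n) mockThetaF

/-- `P(D;q) = Σ_{m,n≥1} χ₋D(n)·χ₁₂(m)·p((Dm²+1)/24)·q^{mn} ∈ ℤ⟦q⟧`: the coefficient of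
`q^N` is the sum over factorizations `N = m·n` with `m, n ≥ 1`. -/
noncomputable def PSeries (D : ℕ) : PowerSeries ℤ :=
  PowerSeries.mk fun N =>
    ∑ x ∈ Nat.divisorsAntidiagonal N, chiD D x.2 * chi12 x.1 * pVal D x.1

/-- `Σ_{m≥1, gcd(m,6)=1} χ₋₁₂(m)·m·a_f((Dm²+1)/24)·(Σ_{n≥1, gcd(n,D)=1} χ₋D(n)·q^{mn})`:
the coefficient of `q^N` is the sum over factorizations `N = m·n` with `m, n ≥ 1`,
`gcd(m,6) = 1` and `gcd(n,D) = 1`.  (When `gcd(m,6) = 1` and `D ≡ 23 (mod 24)`, the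
quantity `(D·m²+1)/24` is a non-negative integer, so natural division is exact.) -/
noncomputable def LSeries' (D : ℕ) : PowerSeries ℤ :=
  PowerSeries.mk fun N =>
    ∑ x ∈ Nat.divisorsAntidiagonal N,
      if Nat.gcd x.1 6 = 1 ∧ Nat.gcd x.2 D = 1 then
        chiNeg12 x.1 * (x.1 : ℤ) * aF ((D * x.1 ^ 2 + 1) / 24) * chiD D x.2
      else 0


section AuxiliaryDurfee
open Finset

namespace DurfeeAux

variable (R : Type*) [CommRing R]

noncomputable def gg (j : ℕ) : PowerSeries R := PowerSeries.invOfUnit (1 - X ^ j) 1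

lemma one_sub_mul_gg (j : ℕ) (hj : j ≠ 0) : (1 - X ^ j) * gg R j = 1 := by
  apply PowerSeries.mul_invOfUnit
  simp [hj, zero_pow hj]

noncomputable def Pp (k : ℕ) : PowerSeries R := ∏ j ∈ Icc 1 k, gg R j

noncomputable def uu (a m : ℕ) : PowerSeries R := ∏ i ∈ range m, (1 - X ^ (a + i + 1))

lemma uu_zero (a : ℕ) : uu R a 0 = 1 := by simp [uu]

lemma uu_succ (a m : ℕ) : uu R a (m + 1) = uu R a m * (1 - X ^ (a + m + 1)) :=
  prod_range_succ _ _

lemma uu_succ' (a m : ℕ) : uu R a (m + 1) = (1 - X ^ (a + 1)) * uu R (a + 1) m := by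
  rw [uu, prod_range_succ', mul_comm, uu]
  congr 1
  apply prod_congr rfl
  intro i _
  rw [show a + (i + 1) + 1 = a + 1 + i + 1 from by omega]

lemma Pp_zero : Pp R 0 = 1 := by simp [Pp]

lemma Pp_succ (k : ℕ) : Pp R (k + 1) = Pp R k * gg R (k + 1) := by
  rw [Pp, Pp, Finset.prod_Icc_succ_top (by omega)]

lemma one_sub_mul_Pp_succ (k : ℕ) : (1 - X ^ (k + 1)) * Pp R (k + 1) = Pp R k := by
  rw [Pp_succ]
  calc (1 - X ^ (k + 1)) * (Pp R k * gg R (k + 1))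
      = Pp R k * ((1 - X ^ (k + 1)) * gg R (k + 1)) := by ring
    _ = Pp R k := by rw [one_sub_mul_gg R (k + 1) (by omega), mul_one]

lemma uu_mul_Pp (k : ℕ) : ∀ m, uu R k m * Pp R (k + m) = Pp R k := by
  intro m
  induction m with
  | zero => simp [uu_zero]
  | succ m ih =>
      have : k + (m + 1) = (k + m) + 1 := by omega
      rw [this, uu_succ, Pp_succ]
      calc uu R k m * (1 - X ^ (k + m + 1)) * (Pp R (k + m) * gg R (k + m + 1))
          = (uu R k m * Pp R (k + m)) * ((1 - X ^ (k + m + 1)) * gg R (k + m + 1)) := by ring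
        _ = Pp R k := by rw [one_sub_mul_gg R (k + m + 1) (by omega), mul_one, ih]

noncomputable def GG (n k : ℕ) : PowerSeries R := if k ≤ n then uu R (n - k) k * Pp R k else 0

lemma GG_zero (n : ℕ) : GG R n 0 = 1 := by simp [GG, uu_zero, Pp_zero]

lemma GG_pascal (n j : ℕ) (hj : j ≤ n) :
    GG R (n + 1) (j + 1) = GG R n (j + 1) + X ^ (n - j) * GG R n j := by
  rcases eq_or_lt_of_le hj with rfl | hlt
  · -- j = n
    have h1 : GG R (j + 1) (j + 1) = uu R 0 (j + 1) * Pp R (j + 1) := by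
      simp [GG, Nat.sub_self]
    have h2 : GG R j (j + 1) = 0 := by rw [GG, if_neg (by omega)]
    have h3 : GG R j j = uu R 0 j * Pp R j := by simp [GG, Nat.sub_self]
    rw [h1, h2, h3, zero_add, Nat.sub_self, pow_zero, one_mul, uu_succ]
    calc uu R 0 j * (1 - X ^ (0 + j + 1)) * Pp R (j + 1)
        = uu R 0 j * ((1 - X ^ (j + 1)) * Pp R (j + 1)) := by rw [zero_add]; ring
      _ = uu R 0 j * Pp R j := by rw [one_sub_mul_Pp_succ]
  · obtain ⟨b, hb⟩ : ∃ b, n = j + b + 1 := ⟨n - j - 1, by omega⟩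
    subst hb
    rw [GG, GG, GG, if_pos (by omega), if_pos (by omega), if_pos (by omega)]
    have e1 : j + b + 1 + 1 - (j + 1) = b + 1 := by omega
    have e2 : j + b + 1 - (j + 1) = b := by omega
    have e3 : j + b + 1 - j = b + 1 := by omega
    rw [e1, e2, e3]
    rw [uu_succ, uu_succ']
    have e4 : b + 1 + j + 1 = b + j + 2 := by omega
    rw [e4]
    have key := one_sub_mul_Pp_succ R j
    have hX : (X : PowerSeries R) ^ (b + j + 2) = X ^ (b + 1) * X ^ (j + 1) := by
      rw [← pow_add]; congr 1; omega
    rw [hX]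
    linear_combination (uu R (b + 1) j * X ^ (b + 1)) * key

noncomputable def EE (n r : ℕ) : PowerSeries R :=
  ∑ k ∈ range (n + 1), X ^ (k ^ 2 + r * k) * GG R n k * uu R (k + r) (n - k)

lemma GG_top (n : ℕ) : GG R n (n + 1) = 0 := by rw [GG, if_neg (by omega)]

lemma EE_eq_one (n : ℕ) : ∀ r, EE R n r = 1 := by
  induction n with
  | zero => intro r; simp [EE, GG_zero, uu_zero]
  | succ n ih =>
    intro r
    have hEE : EE R (n + 1) r
        = (∑ j ∈ range (n + 1),
            X ^ ((j+1) ^ 2 + r * (j+1)) * GG R (n+1) (j+1) * uu R ((j+1) + r) (n + 1 - (j+1)))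
          + X ^ (0 ^ 2 + r * 0) * GG R (n+1) 0 * uu R (0 + r) (n + 1 - 0) := by
      rw [EE, sum_range_succ']
    have hF0 : X ^ (0 ^ 2 + r * 0) * GG R (n+1) 0 * uu R (0 + r) (n + 1 - 0)
        = uu R r (n + 1) := by
      simp [GG_zero]
    have hsplit : ∀ j ∈ range (n + 1),
        X ^ ((j+1) ^ 2 + r * (j+1)) * GG R (n+1) (j+1) * uu R ((j+1) + r) (n + 1 - (j+1))
        = (X ^ ((j+1) ^ 2 + r * (j+1)) * GG R n (j+1) * uu R ((j+1) + r) (n + 1 - (j+1)))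
          + X ^ (n + r + 1)
            * (X ^ (j ^ 2 + (r+1) * j) * GG R n j * uu R (j + (r+1)) (n - j)) := by
      intro j hj
      rw [mem_range] at hj
      have hj' : j ≤ n := by omega
      rw [GG_pascal R n j hj']
      have e1 : n + 1 - (j + 1) = n - j := by omega
      have e2 : j + 1 + r = j + (r + 1) := by omega
      rw [e1, e2]
      have e3 : (X : PowerSeries R) ^ ((j+1) ^ 2 + r * (j+1)) * X ^ (n - j)
          = X ^ (n + r + 1) * X ^ (j ^ 2 + (r+1) * j) := by
        rw [← pow_add, ← pow_add]
        congr 1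
        have h2 : (j+1) ^ 2 = j ^ 2 + 2 * j + 1 := by ring
        have h3 : j ^ 2 + 2 * j + 1 + r * (j+1) + (n - j) = n + r + 1 + (j ^ 2 + (r+1) * j) := by
          have : r * (j + 1) = r * j + r := by ring
          have : (r + 1) * j = r * j + j := by ring
          nlinarith [Nat.sub_add_cancel hj']
        omega
      linear_combination (GG R n j * uu R (j + (r+1)) (n - j)) * e3
    have hsum1 : ∑ j ∈ range (n + 1),
        X ^ ((j+1) ^ 2 + r * (j+1)) * GG R (n+1) (j+1) * uu R ((j+1) + r) (n + 1 - (j+1))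
        = (∑ j ∈ range (n + 1),
            X ^ ((j+1) ^ 2 + r * (j+1)) * GG R n (j+1) * uu R ((j+1) + r) (n + 1 - (j+1)))
          + X ^ (n + r + 1) * EE R n (r + 1) := by
      rw [Finset.sum_congr rfl hsplit, Finset.sum_add_distrib, ← Finset.mul_sum, EE]
    have hHtop : X ^ ((n+1) ^ 2 + r * (n+1)) * GG R n (n+1) * uu R ((n+1) + r) (n + 1 - (n+1))
        = 0 := by
      rw [GG_top]; ring
    have hsum2 : ∑ j ∈ range (n + 1),
          X ^ ((j+1) ^ 2 + r * (j+1)) * GG R n (j+1) * uu R ((j+1) + r) (n + 1 - (j+1))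
        = (∑ k ∈ range (n + 1),
            X ^ (k ^ 2 + r * k) * GG R n k * uu R (k + r) (n + 1 - k))
          - X ^ (0 ^ 2 + r * 0) * GG R n 0 * uu R (0 + r) (n + 1 - 0) := by
      have := Finset.sum_range_succ'
        (fun k => X ^ (k ^ 2 + r * k) * GG R n k * uu R (k + r) (n + 1 - k)) (n + 1)
      rw [Finset.sum_range_succ] at this
      rw [eq_sub_iff_add_eq]
      rw [← this, hHtop, add_zero]
    have hsum3 : ∑ k ∈ range (n + 1),
          X ^ (k ^ 2 + r * k) * GG R n k * uu R (k + r) (n + 1 - k)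
        = (1 - X ^ (n + r + 1)) := by
      have hterm : ∀ k ∈ range (n + 1),
          X ^ (k ^ 2 + r * k) * GG R n k * uu R (k + r) (n + 1 - k)
          = (X ^ (k ^ 2 + r * k) * GG R n k * uu R (k + r) (n - k)) * (1 - X ^ (n + r + 1)) := by
        intro k hk
        rw [mem_range] at hk
        have hk' : k ≤ n := by omega
        have e1 : n + 1 - k = (n - k) + 1 := by omega
        rw [e1, uu_succ]
        have e2 : k + r + (n - k) + 1 = n + r + 1 := by omega
        rw [e2]
        ring
      rw [Finset.sum_congr rfl hterm, ← Finset.sum_mul]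
      have : ∑ k ∈ range (n + 1), X ^ (k ^ 2 + r * k) * GG R n k * uu R (k + r) (n - k)
          = EE R n r := rfl
      rw [this, ih r, one_mul]
    have hH0 : X ^ (0 ^ 2 + r * 0) * GG R n 0 * uu R (0 + r) (n + 1 - 0) = uu R r (n + 1) := by
      simp [GG_zero]
    rw [hEE, hsum1, hsum2, hsum3, hH0, hF0, ih (r + 1)]
    ring

lemma X_pow_dvd_uu_sub_one (a : ℕ) : ∀ m, (X : PowerSeries R) ^ (a + 1) ∣ (uu R a m - 1) := by
  intro m
  induction m with
  | zero => simp [uu_zero]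
  | succ m ih =>
    rw [uu_succ]
    have hX : (X : PowerSeries R) ^ (a + m + 1) = X ^ (a + 1) * X ^ m := by
      rw [← pow_add]; congr 1; omega
    have heq : uu R a m * (1 - X ^ (a + m + 1)) - 1
        = (uu R a m - 1) - X ^ (a + 1) * (X ^ m * uu R a m) := by
      linear_combination (-(uu R a m)) * hX
    rw [heq]
    exact dvd_sub ih (Dvd.intro _ rfl)

lemma coeff_eq_zero_of_X_dvd (n d : ℕ) (h : n < d) (φ : PowerSeries R)
    (hd : (X : PowerSeries R) ^ d ∣ φ) : coeff n φ = 0 :=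
  (PowerSeries.X_pow_dvd_iff.mp hd) n h

lemma coeff_Pp_self (n : ℕ) :
    (coeff n) (Pp R n)
      = ∑ k ∈ range (n + 1), coeff n (X ^ (k ^ 2) * (Pp R k * Pp R k)) := by
  have h1 : Pp R n = ∑ k ∈ range (n + 1),
      X ^ (k ^ 2) * (uu R (n - k) k * (Pp R k * Pp R k)) := by
    calc Pp R n = EE R n 0 * Pp R n := by rw [EE_eq_one, one_mul]
      _ = ∑ k ∈ range (n + 1),
            X ^ (k ^ 2 + 0 * k) * GG R n k * uu R (k + 0) (n - k) * Pp R n := by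
          rw [EE, Finset.sum_mul]
      _ = _ := by
          apply Finset.sum_congr rfl
          intro k hk
          rw [mem_range] at hk
          have hk' : k ≤ n := by omega
          rw [GG, if_pos hk']
          have h2 : uu R k (n - k) * Pp R n = Pp R k := by
            have := uu_mul_Pp R k (n - k)
            rwa [show k + (n - k) = n from by omega] at this
          calc X ^ (k ^ 2 + 0 * k) * (uu R (n - k) k * Pp R k) * uu R (k + 0) (n - k) * Pp R n
              = X ^ (k ^ 2 + 0 * k) * (uu R (n - k) k
                  * (Pp R k * (uu R (k + 0) (n - k) * Pp R n))) := by ring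
            _ = X ^ (k ^ 2) * (uu R (n - k) k * (Pp R k * Pp R k)) := by
                rw [show k + 0 = k from rfl, h2, show k ^ 2 + 0 * k = k ^ 2 from by omega]
  rw [h1, map_sum]
  apply Finset.sum_congr rfl
  intro k hk
  rw [mem_range] at hk
  have hk' : k ≤ n := by omega
  have hkk : k ≤ k ^ 2 := Nat.le_self_pow (by norm_num) k
  obtain ⟨t, ht⟩ := X_pow_dvd_uu_sub_one R (n - k) k
  have hdiff : X ^ (k ^ 2) * (uu R (n - k) k * (Pp R k * Pp R k))
      - X ^ (k ^ 2) * (Pp R k * Pp R k)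
      = X ^ (k ^ 2) * ((uu R (n - k) k - 1) * (Pp R k * Pp R k)) := by ring
  have hdvd : (X : PowerSeries R) ^ (n + 1) ∣
      X ^ (k ^ 2) * ((uu R (n - k) k - 1) * (Pp R k * Pp R k)) := by
    rw [ht]
    have : (X : PowerSeries R) ^ (n + 1) ∣ X ^ (k ^ 2) * X ^ (n - k + 1) := by
      rw [← pow_add]
      exact pow_dvd_pow X (by omega)
    calc (X : PowerSeries R) ^ (n + 1) ∣ X ^ (k ^ 2) * X ^ (n - k + 1) := this
      _ ∣ X ^ (k ^ 2) * (X ^ (n - k + 1) * t * (Pp R k * Pp R k)) :=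
          ⟨t * (Pp R k * Pp R k), by ring⟩
  have hz : coeff n (X ^ (k ^ 2) * (uu R (n - k) k * (Pp R k * Pp R k))
      - X ^ (k ^ 2) * (Pp R k * Pp R k)) = 0 := by
    rw [hdiff]
    exact coeff_eq_zero_of_X_dvd R n (n + 1) (by omega) _ hdvd
  rw [map_sub, sub_eq_zero] at hz
  exact hz

section Counting
open Finset.HasAntidiagonal
open scoped Classical

variable {α : Type*}

/-- A convenience constructor for the power series whose coefficients indicate a subset. -/
noncomputable def indicatorSeries (α : Type*) [Semiring α] (s : Set ℕ) : PowerSeries α :=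
  PowerSeries.mk fun n => if n ∈ s then 1 else 0

theorem coeff_indicator (s : Set ℕ) [Semiring α] (n : ℕ) :
    coeff n (indicatorSeries α s) = if n ∈ s then 1 else 0 :=
  coeff_mk _ _

theorem coeff_indicator_pos (s : Set ℕ) [Semiring α] (n : ℕ) (h : n ∈ s) :
    coeff n (indicatorSeries α s) = 1 := by rw [coeff_indicator, if_pos h]

theorem coeff_indicator_neg (s : Set ℕ) [Semiring α] (n : ℕ) (h : n ∉ s) :
    coeff n (indicatorSeries α s) = 0 := by rw [coeff_indicator, if_neg h]

theorem constantCoeff_indicator (s : Set ℕ) [Semiring α] :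
    constantCoeff (indicatorSeries α s) = if 0 ∈ s then 1 else 0 :=
  rfl

-- The main workhorse of the partition theorem proof.
theorem partialGF_prop (α : Type*) [CommSemiring α] (n : ℕ) (s : Finset ℕ) (hs : ∀ i ∈ s, 0 < i)
    (c : ℕ → Set ℕ) (hc : ∀ i, i ∉ s → 0 ∈ c i) :
    #{p : n.Partition | (∀ j, p.parts.count j ∈ c j) ∧ ∀ j ∈ p.parts, j ∈ s} =
      coeff n (∏ i ∈ s, indicatorSeries α ((· * i) '' c i)) := by
  simp_rw [coeff_prod, coeff_indicator, prod_boole, sum_boole]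
  apply congr_arg
  simp only [mem_univ, forall_true_left, not_and, not_forall, exists_prop,
    Set.mem_image, not_exists]
  set φ : (a : Nat.Partition n) →
    a ∈ filter (fun p ↦ (∀ (j : ℕ), Multiset.count j p.parts ∈ c j) ∧ ∀ j ∈ p.parts, j ∈ s) univ →
    ℕ →₀ ℕ := fun p _ => {
      toFun := fun i => Multiset.count i p.parts • i
      support := Finset.filter (fun i => i ≠ 0) p.parts.toFinset
      mem_support_toFun := fun a => by
        simp only [smul_eq_mul, ne_eq, mul_eq_zero, Multiset.count_eq_zero]
        rw [not_or, not_not]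
        simp only [Multiset.mem_toFinset, not_not, mem_filter] }
  refine Finset.card_bij φ ?_ ?_ ?_
  · intro a ha
    simp only [φ, not_forall, not_exists, not_and, exists_prop, mem_filter]
    rw [mem_finsuppAntidiag]
    dsimp only [ne_eq, smul_eq_mul, id_eq, eq_mpr_eq_cast, le_eq_subset, Finsupp.coe_mk]
    simp only [mem_univ, forall_true_left, not_and, not_forall, exists_prop,
      mem_filter, true_and] at ha
    refine ⟨⟨?_, fun i ↦ ?_⟩, fun i _ ↦ ⟨a.parts.count i, ha.1 i, rfl⟩⟩
    · conv_rhs => simp [← a.parts_sum]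
      rw [sum_multiset_count_of_subset _ s]
      · simp only [smul_eq_mul]
      · intro i
        simp only [Multiset.mem_toFinset, not_not, mem_filter]
        apply ha.2
    · simp only [ne_eq, Multiset.mem_toFinset, not_not, mem_filter, and_imp]
      exact fun hi _ ↦ ha.2 i hi
  · intro p₁ hp₁ p₂ hp₂ h
    apply Nat.Partition.ext
    simp only [true_and, mem_univ, mem_filter] at hp₁ hp₂
    ext i
    simp only [φ, ne_eq, Multiset.mem_toFinset, not_not, smul_eq_mul, Finsupp.mk.injEq] at h
    by_cases hi : i = 0
    · rw [hi]
      rw [Multiset.count_eq_zero_of_notMem]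
      · rw [Multiset.count_eq_zero_of_notMem]
        intro a; exact Nat.lt_irrefl 0 (hs 0 (hp₂.2 0 a))
      intro a; exact Nat.lt_irrefl 0 (hs 0 (hp₁.2 0 a))
    · rw [← mul_left_inj' hi]
      rw [funext_iff] at h
      exact h.2 i
  · simp only [φ, mem_filter, mem_finsuppAntidiag, mem_univ, exists_prop, true_and, and_assoc]
    rintro f ⟨hf, hf₃, hf₄⟩
    have hf' : f ∈ finsuppAntidiag s n := mem_finsuppAntidiag.mpr ⟨hf, hf₃⟩
    simp only [mem_finsuppAntidiag] at hf'
    refine ⟨⟨∑ i ∈ s, Multiset.replicate (f i / i) i, ?_, ?_⟩, ?_, ?_, ?_⟩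
    · intro i hi
      simp only [exists_prop, Multiset.mem_sum, mem_map, Function.Embedding.coeFn_mk] at hi
      rcases hi with ⟨t, ht, z⟩
      apply hs
      rwa [Multiset.eq_of_mem_replicate z]
    · simp_rw [Multiset.sum_sum, Multiset.sum_replicate, Nat.nsmul_eq_mul]
      rw [← hf'.1]
      refine sum_congr rfl fun i hi => Nat.div_mul_cancel ?_
      rcases hf₄ i hi with ⟨w, _, hw₂⟩
      rw [← hw₂]
      exact dvd_mul_left _ _
    · intro i
      simp_rw [Multiset.count_sum', Multiset.count_replicate, sum_ite_eq']
      split_ifs with h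
      · rcases hf₄ i h with ⟨w, hw₁, hw₂⟩
        rwa [← hw₂, Nat.mul_div_cancel _ (hs i h)]
      · exact hc _ h
    · intro i hi
      rw [Multiset.mem_sum] at hi
      rcases hi with ⟨j, hj₁, hj₂⟩
      rwa [Multiset.eq_of_mem_replicate hj₂]
    · ext i
      simp_rw [Multiset.count_sum', Multiset.count_replicate, sum_ite_eq']
      simp only [ne_eq, Multiset.mem_toFinset, not_not, smul_eq_mul, ite_mul,
        zero_mul, Finsupp.coe_mk]
      split_ifs with h
      · apply Nat.div_mul_cancel
        rcases hf₄ i h with ⟨w, _, hw₂⟩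
        apply Dvd.intro_left _ hw₂
      · apply symm
        rw [← Finsupp.notMem_support_iff]
        exact notMem_mono hf'.2 h


end Counting

variable (R : Type*) [CommRing R]

lemma one_sub_mul_indicator (j : ℕ) (hj : j ≠ 0) :
    ((1 : PowerSeries R) - X ^ j) * indicatorSeries R {m | j ∣ m} = 1 := by
  ext m
  have hring : ((1 : PowerSeries R) - X ^ j) * indicatorSeries R {m | j ∣ m}
      = indicatorSeries R {m | j ∣ m} - indicatorSeries R {m | j ∣ m} * X ^ j := by ring
  rw [hring, map_sub, PowerSeries.coeff_mul_X_pow', coeff_indicator, PowerSeries.coeff_one]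
  simp only [Set.mem_setOf_eq]
  rcases Nat.eq_zero_or_pos m with rfl | hm
  · rw [if_pos (dvd_zero j), if_neg (by omega), sub_zero, if_pos rfl]
  · rw [if_neg (show ¬ m = 0 by omega)]
    by_cases h : j ≤ m
    · rw [if_pos h, coeff_indicator]
      simp only [Set.mem_setOf_eq]
      have hiff : j ∣ m ↔ j ∣ m - j := by
        constructor
        · intro hd; exact (Nat.dvd_sub hd dvd_rfl)
        · intro hd
          have := Nat.dvd_add hd (dvd_refl j)
          rwa [Nat.sub_add_cancel h] at this
      simp only [hiff]
      by_cases hd : j ∣ m - j <;> simp [hd]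
    · rw [if_neg h, sub_zero, if_neg]
      intro hd
      exact h (Nat.le_of_dvd hm hd)

lemma gg_eq_indicator (j : ℕ) (hj : j ≠ 0) :
    gg R j = indicatorSeries R {m | j ∣ m} := by
  have h1 := one_sub_mul_gg R j hj
  have h2 := one_sub_mul_indicator R j hj
  calc gg R j = (((1 : PowerSeries R) - X ^ j) * indicatorSeries R {m | j ∣ m}) * gg R j := by
        rw [h2, one_mul]
    _ = indicatorSeries R {m | j ∣ m} * ((1 - X ^ j) * gg R j) := by ring
    _ = _ := by rw [h1, mul_one]

lemma coeff_Pp_eq_card (n : ℕ) :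
    coeff n (Pp R n) = (Fintype.card (Nat.Partition n) : R) := by
  classical
  have himg : ∀ i : ℕ, ((· * i) '' (Set.univ : Set ℕ)) = {m | i ∣ m} := by
    intro i
    ext m
    simp only [Set.image_univ, Set.mem_range, Set.mem_setOf_eq]
    constructor
    · rintro ⟨a, rfl⟩; exact Dvd.intro_left a rfl
    · rintro ⟨a, rfl⟩; exact ⟨a, mul_comm a i⟩
  have hprop := partialGF_prop R n (Finset.Icc 1 n)
    (fun i hi => by rw [Finset.mem_Icc] at hi; omega) (fun _ => Set.univ)
    (fun _ _ => trivial)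
  have hPp : Pp R n = ∏ i ∈ Finset.Icc 1 n, indicatorSeries R ((· * i) '' Set.univ) := by
    rw [Pp]
    apply Finset.prod_congr rfl
    intro j hj
    rw [Finset.mem_Icc] at hj
    rw [gg_eq_indicator R j (by omega), himg]
  rw [hPp, ← hprop]
  congr 1
  rw [← Finset.card_univ]
  congr 1
  rw [Finset.eq_univ_iff_forall]
  intro p
  simp only [Finset.mem_filter, Finset.mem_univ, true_and]
  refine ⟨fun j => trivial, fun j hj => ?_⟩
  rw [Finset.mem_Icc]
  constructor
  · exact p.parts_pos hj
  · have : j ≤ p.parts.sum := Multiset.single_le_sum (fun _ _ => Nat.zero_le _) _ hj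
    rwa [p.parts_sum] at this

end DurfeeAux

open DurfeeAux in
/-- Key congruence: the coefficients of the mock theta function agree with the
partition numbers modulo 4. -/
lemma aF_congr_card (n : ℕ) :
    ((aF n : ℤ) : ZMod 4) = (Fintype.card (Nat.Partition n) : ZMod 4) := by
  classical
  set φ : ℤ →+* ZMod 4 := Int.castRingHom (ZMod 4) with hφ
  have h40 : (4 : PowerSeries (ZMod 4)) = 0 := by
    have := congrArg ((PowerSeries.C (R := ZMod 4))) (show (4 : ZMod 4) = 0 by decide)
    simpa [map_ofNat] using this
  have hsq : ∀ j : ℕ, j ≠ 0 →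
      (PowerSeries.map φ (onePlusXInv j)) ^ 2 = (gg (ZMod 4) j) ^ 2 := by
    intro j hj
    set A : PowerSeries (ZMod 4) := PowerSeries.map φ (onePlusXInv j) with hA
    have h1 : ((1 : PowerSeries (ZMod 4)) + X ^ j) * A = 1 := by
      have hZ : ((1 : PowerSeries ℤ) + X ^ j) * onePlusXInv j = 1 := by
        apply PowerSeries.mul_invOfUnit
        simp [zero_pow hj]
      have := congrArg (PowerSeries.map φ) hZ
      simpa using this
    have h2 : ((1 : PowerSeries (ZMod 4)) - X ^ j) ^ 2 = (1 + X ^ j) ^ 2 := by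
      linear_combination (-(X : PowerSeries (ZMod 4)) ^ j) * h40
    have h3 : ((1 : PowerSeries (ZMod 4)) - X ^ j) ^ 2 * A ^ 2 = 1 := by
      rw [h2]
      calc ((1 : PowerSeries (ZMod 4)) + X ^ j) ^ 2 * A ^ 2
          = (((1 : PowerSeries (ZMod 4)) + X ^ j) * A) ^ 2 := by ring
        _ = 1 := by rw [h1, one_pow]
    have h4 : ((1 : PowerSeries (ZMod 4)) - X ^ j) ^ 2 * (gg (ZMod 4) j) ^ 2 = 1 := by
      have := one_sub_mul_gg (ZMod 4) j hj
      calc ((1 : PowerSeries (ZMod 4)) - X ^ j) ^ 2 * (gg (ZMod 4) j) ^ 2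
          = (((1 : PowerSeries (ZMod 4)) - X ^ j) * gg (ZMod 4) j) ^ 2 := by ring
        _ = 1 := by rw [this, one_pow]
    calc A ^ 2 = A ^ 2 * (((1 : PowerSeries (ZMod 4)) - X ^ j) ^ 2 * (gg (ZMod 4) j) ^ 2) := by
          rw [h4, mul_one]
      _ = (((1 : PowerSeries (ZMod 4)) - X ^ j) ^ 2 * A ^ 2) * (gg (ZMod 4) j) ^ 2 := by ring
      _ = (gg (ZMod 4) j) ^ 2 := by rw [h3, one_mul]
  have hmap : ∀ k : ℕ, PowerSeries.map φ (mockThetaTerm k)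
      = X ^ (k ^ 2) * (Pp (ZMod 4) k * Pp (ZMod 4) k) := by
    intro k
    rw [mockThetaTerm, map_mul, map_pow, PowerSeries.map_X, map_prod]
    congr 1
    have hterm : ∀ j ∈ Finset.Icc 1 k,
        PowerSeries.map φ (onePlusXInv j ^ 2) = (gg (ZMod 4) j) ^ 2 := by
      intro j hj
      rw [Finset.mem_Icc] at hj
      rw [map_pow]
      exact hsq j (by omega)
    rw [Finset.prod_congr rfl hterm, Finset.prod_pow, sq]
    rfl
  have hcoeff : ∀ k : ℕ, ((PowerSeries.coeff n (mockThetaTerm k) : ℤ) : ZMod 4)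
      = PowerSeries.coeff n (X ^ (k ^ 2) * (Pp (ZMod 4) k * Pp (ZMod 4) k)) := by
    intro k
    rw [← hmap, PowerSeries.coeff_map]
    rfl
  calc ((aF n : ℤ) : ZMod 4)
      = ((∑ k ∈ Finset.range (n + 1), PowerSeries.coeff n (mockThetaTerm k) : ℤ) : ZMod 4) := by
        rw [aF, mockThetaF, PowerSeries.coeff_mk]
    _ = ∑ k ∈ Finset.range (n + 1),
          ((PowerSeries.coeff n (mockThetaTerm k) : ℤ) : ZMod 4) := by push_cast; ring
    _ = ∑ k ∈ Finset.range (n + 1),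
          PowerSeries.coeff n (X ^ (k ^ 2) * (Pp (ZMod 4) k * Pp (ZMod 4) k)) := by
        exact Finset.sum_congr rfl fun k _ => hcoeff k
    _ = PowerSeries.coeff n (Pp (ZMod 4) n) := (coeff_Pp_self (ZMod 4) n).symm
    _ = (Fintype.card (Nat.Partition n) : ZMod 4) := coeff_Pp_eq_card (ZMod 4) n

lemma gcd6_of_mod12 (m : ℕ)
    (h : m % 12 = 1 ∨ m % 12 = 5 ∨ m % 12 = 7 ∨ m % 12 = 11) : Nat.gcd m 6 = 1 := by
  have h6 : m % 6 = 1 ∨ m % 6 = 5 := by omega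
  rw [Nat.gcd_comm, Nat.gcd_rec]
  rcases h6 with h6 | h6 <;> rw [h6] <;> decide

lemma mod12_cases (m : ℕ) (h : Nat.gcd m 6 = 1) :
    m % 12 = 1 ∨ m % 12 = 5 ∨ m % 12 = 7 ∨ m % 12 = 11 := by
  have h2 : ¬ (2 ∣ m) := by
    intro hd
    have : 2 ∣ Nat.gcd m 6 := Nat.dvd_gcd hd (by norm_num)
    omega
  have h3 : ¬ (3 ∣ m) := by
    intro hd
    have : 3 ∣ Nat.gcd m 6 := Nat.dvd_gcd hd (by norm_num)
    omega
  omega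

lemma chi12_eq_zero_of_gcd (m : ℕ) (h : Nat.gcd m 6 ≠ 1) : chi12 m = 0 := by
  rw [chi12]
  split_ifs with h1 h2
  · exact absurd (gcd6_of_mod12 m (by tauto)) h
  · exact absurd (gcd6_of_mod12 m (by tauto)) h
  · rfl

lemma sq_mod24 (m : ℕ) (h : Nat.gcd m 6 = 1) : m ^ 2 % 24 = 1 := by
  have h2 : ¬ (2 ∣ m) := by
    intro hd
    have : 2 ∣ Nat.gcd m 6 := Nat.dvd_gcd hd (by norm_num)
    omega
  have h3 : ¬ (3 ∣ m) := by
    intro hd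
    have : 3 ∣ Nat.gcd m 6 := Nat.dvd_gcd hd (by norm_num)
    omega
  have hr : m % 24 = 1 ∨ m % 24 = 5 ∨ m % 24 = 7 ∨ m % 24 = 11 ∨ m % 24 = 13 ∨
      m % 24 = 17 ∨ m % 24 = 19 ∨ m % 24 = 23 := by omega
  have hpow : m ^ 2 % 24 = (m % 24) ^ 2 % 24 := Nat.pow_mod m 2 24
  rcases hr with hr|hr|hr|hr|hr|hr|hr|hr <;> rw [hpow, hr] <;> norm_num

lemma dvd24 (D m : ℕ) (hD : D % 24 = 23) (h : Nat.gcd m 6 = 1) : 24 ∣ D * m ^ 2 + 1 := by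
  have h1 : m ^ 2 % 24 = 1 := sq_mod24 m h
  have h2 : (D * m ^ 2) % 24 = 23 := by
    rw [Nat.mul_mod, h1, hD]
  omega

lemma chi_bridge (m : ℕ) (h : Nat.gcd m 6 = 1) :
    ((chi12 m : ℤ) : ZMod 4) = (((chiNeg12 m * m : ℤ)) : ZMod 4) := by
  have hcase := mod12_cases m h
  have hmz : ((m : ℕ) : ZMod 4) = ((m % 4 : ℕ) : ZMod 4) := (ZMod.natCast_mod m 4).symm
  rcases hcase with h1 | h1 | h1 | h1
  · have hm4 : m % 4 = 1 := by omega
    have e1 : chi12 m = 1 := by rw [chi12, if_pos (Or.inl h1)]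
    have e2 : chiNeg12 m = 1 := by rw [chiNeg12, if_pos (Or.inl h1)]
    rw [e1, e2]
    push_cast
    rw [hmz, hm4]
    decide
  · have hm4 : m % 4 = 1 := by omega
    have e1 : chi12 m = -1 := by
      rw [chi12, if_neg (by omega), if_pos (Or.inl h1)]
    have e2 : chiNeg12 m = -1 := by
      rw [chiNeg12, if_neg (by omega), if_pos (Or.inl h1)]
    rw [e1, e2]
    push_cast
    rw [hmz, hm4]
    decide
  · have hm4 : m % 4 = 3 := by omega
    have e1 : chi12 m = -1 := by
      rw [chi12, if_neg (by omega), if_pos (Or.inr h1)]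
    have e2 : chiNeg12 m = 1 := by rw [chiNeg12, if_pos (Or.inr h1)]
    rw [e1, e2]
    push_cast
    rw [hmz, hm4]
    decide
  · have hm4 : m % 4 = 3 := by omega
    have e1 : chi12 m = 1 := by rw [chi12, if_pos (Or.inr h1)]
    have e2 : chiNeg12 m = -1 := by
      rw [chiNeg12, if_neg (by omega), if_pos (Or.inr h1)]
    rw [e1, e2]
    push_cast
    rw [hmz, hm4]
    decide


end AuxiliaryDurfee

theorem PSeries_congruent_logDeriv_mod_four (D : ℕ) (hD : 1 < D) (hsf : Squarefree D)
    (h23 : D % 24 = 23) :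
    ∀ N : ℕ, (PowerSeries.coeff N) (PSeries D) ≡
      (PowerSeries.coeff N) (LSeries' D) [ZMOD 4] := by
  intro N
  have main : (((PowerSeries.coeff N) (PSeries D) : ℤ) : ZMod 4)
      = (((PowerSeries.coeff N) (LSeries' D) : ℤ) : ZMod 4) := by
    rw [PSeries, LSeries', PowerSeries.coeff_mk, PowerSeries.coeff_mk]
    push_cast
    apply Finset.sum_congr rfl
    intro x hx
    rw [Nat.mem_divisorsAntidiagonal] at hx
    have hx2 : x.2 ≠ 0 := by
      intro h0
      apply hx.2
      rw [← hx.1, h0, mul_zero]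
    by_cases hn : Nat.gcd x.2 D = 1
    · by_cases hm : Nat.gcd x.1 6 = 1
      · rw [if_pos ⟨hm, hn⟩]
        have hdvd : 24 ∣ D * x.1 ^ 2 + 1 := dvd24 D x.1 h23 hm
        rw [pVal, if_pos hdvd]
        have hb := chi_bridge x.1 hm
        have ha := aF_congr_card ((D * x.1 ^ 2 + 1) / 24)
        push_cast at hb ha ⊢
        linear_combination
          (((Fintype.card (Nat.Partition ((D * x.1 ^ 2 + 1) / 24)) : ZMod 4))
            * ((chiD D x.2 : ℤ) : ZMod 4)) * hb
          - (((chiNeg12 x.1 : ℤ) : ZMod 4) * ((x.1 : ℕ) : ZMod 4)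
            * ((chiD D x.2 : ℤ) : ZMod 4)) * ha
      · rw [if_neg (by tauto)]
        rw [chi12_eq_zero_of_gcd x.1 hm]
        push_cast
        ring
    · rw [if_neg (by tauto)]
      have hzero : chiD D x.2 = 0 := by
        rw [chiD]
        apply jacobiSym.eq_zero_iff.mpr
        refine ⟨hx2, ?_⟩
        have : Int.gcd (-(D : ℤ)) (x.2 : ℤ) = Nat.gcd D x.2 := by
          simp [Int.gcd]
        rw [this]
        rw [Nat.gcd_comm] at hn
        exact hn
      rw [hzero]
      push_cast
      ring
  have := (ZMod.intCast_eq_intCast_iff ((PowerSeries.coeff N) (PSeries D))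
    ((PowerSeries.coeff N) (LSeries' D)) 4).mp main
  exact_mod_cast this
end

section
/- In the formal power series ring ℤ⟦q⟧ one has the identity Σ_{n≥0} p(n) q^n = 1 + Σ_{m≥1} q^{m²}·∏_{k=1}^{m}(1−q^k)^{−2}, where the sum over m converges in the q-adic topology (the m-th summand lies in q^{m²}·ℤ⟦q⟧). -/
/-!
STATEMENT 3: In ℤ⟦q⟧ one has the identity
`Σ_{n≥0} p(n) qⁿ = 1 + Σ_{m≥1} q^{m²} ∏_{k=1}^{m} (1-q^k)^{-2}`,
where the sum over `m` converges in the q-adic topology: the `m`-th summand lies in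
`q^{m²}·ℤ⟦q⟧`.  We formalize the q-adically convergent sum coefficientwise: the
`n`-th coefficient of the right-hand side is the (finite) sum of the `n`-th
coefficients of the summands with `m ≤ n` (the `m = 0` summand being the leading
term `1`), and we record that the `m`-th summand indeed lies in `q^{m²}·ℤ⟦q⟧`.
-/

open PowerSeries

/-- The partition generating function `Σ_{n≥0} p(n) qⁿ ∈ ℤ⟦q⟧`. -/
noncomputable def partitionGF : PowerSeries ℤ :=
  PowerSeries.mk fun n => (Fintype.card (Nat.Partition n) : ℤ)

/-- The inverse `(1 - q^k)⁻¹ ∈ ℤ⟦q⟧` (for `k ≥ 1` the constant term is `1`, a unit). -/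
noncomputable def oneMinusXInv (k : ℕ) : PowerSeries ℤ :=
  PowerSeries.invOfUnit (1 - PowerSeries.X ^ k) 1

/-- The `m`-th summand `q^{m²} ∏_{k=1}^{m} (1-q^k)^{-2}`; for `m = 0` this is `1`. -/
noncomputable def durfeeTerm (m : ℕ) : PowerSeries ℤ :=
  PowerSeries.X ^ (m ^ 2) * ∏ k ∈ Finset.Icc 1 m, (oneMinusXInv k) ^ 2

open Finset

namespace DurfeeProof

/-- `cnt M v` = number of elements of `M` that are `≥ v`. -/
def cnt (M : Multiset ℕ) (v : ℕ) : ℕ := Multiset.countP (fun x => v ≤ x) M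

lemma cnt_anti (M : Multiset ℕ) : Antitone (cnt M) := by
  intro v w h
  simp only [cnt, Multiset.countP_eq_card_filter]
  exact Multiset.card_le_card (Multiset.monotone_filter_right M (fun b hb => h.trans hb))

lemma cnt_le_card (M : Multiset ℕ) (v : ℕ) : cnt M v ≤ Multiset.card M := by
  simpa [cnt, Multiset.countP_eq_card_filter] using Multiset.card_le_card (Multiset.filter_le _ M)

lemma cnt_eq_succ_add_count (M : Multiset ℕ) (v : ℕ) :
    cnt M v = cnt M (v + 1) + M.count v := by
  classical
  simp only [cnt, Multiset.countP_eq_card_filter, Multiset.count, ]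
  have key := Multiset.filter_add_filter (fun a => v + 1 ≤ a) (fun a => a = v) M
  have h1 : Multiset.filter (fun a => v + 1 ≤ a ∨ a = v) M = Multiset.filter (fun x => v ≤ x) M := by
    apply Multiset.filter_congr; intro x _; constructor
    · rintro (h | rfl) <;> omega
    · intro h; omega
  have h2 : Multiset.filter (fun a => (v + 1 ≤ a) ∧ a = v) M = 0 := by
    rw [Multiset.filter_eq_nil]; rintro x _ ⟨h, rfl⟩; omega
  rw [h1, h2, add_zero] at key
  have e2 : Multiset.filter (fun a => a = v) M = Multiset.filter (fun x => v = x) M :=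
    Multiset.filter_congr (fun x _ => by constructor <;> omega)
  rw [← key, Multiset.card_add, e2]

lemma cnt_eq_zero (M : Multiset ℕ) (v : ℕ) (h : ∀ x ∈ M, x < v) : cnt M v = 0 := by
  simp only [cnt, Multiset.countP_eq_card_filter, Multiset.card_eq_zero, Multiset.filter_eq_nil]
  intro x hx hvx; exact absurd (h x hx) (by omega)

lemma cnt_add (M N : Multiset ℕ) (v : ℕ) : cnt (M + N) v = cnt M v + cnt N v := by
  simp [cnt, Multiset.countP_add]

lemma count_eq_cnt_sub (M : Multiset ℕ) (v : ℕ) :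
    M.count v = cnt M v - cnt M (v + 1) := by
  have := cnt_eq_succ_add_count M v; omega

/-- sum of a multiset with all elements in `[1, K]` equals the sum of its counting function. -/
lemma sum_cnt (K : ℕ) (M : Multiset ℕ) (h : ∀ x ∈ M, x ∈ Icc 1 K) :
    ∑ i ∈ Icc 1 K, cnt M i = M.sum := by
  classical
  induction M using Multiset.induction with
  | empty => simp [cnt]
  | cons a M ih =>
    have ha : a ∈ Icc 1 K := h a (Multiset.mem_cons_self _ _)
    rw [mem_Icc] at ha
    have hM : ∀ x ∈ M, x ∈ Icc 1 K := fun x hx => h x (Multiset.mem_cons_of_mem hx)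
    have : ∀ i, cnt (a ::ₘ M) i = cnt M i + (if i ≤ a then 1 else 0) := by
      intro i; simp only [cnt, Multiset.countP_cons]
    simp only [this, Finset.sum_add_distrib, ih hM, Multiset.sum_cons]
    have hsum : (∑ i ∈ Icc 1 K, if i ≤ a then 1 else 0) = a := by
      rw [← Finset.card_filter]
      have hf : Finset.filter (fun i => i ≤ a) (Icc 1 K) = Icc 1 a := by
        ext i; simp only [mem_filter, mem_Icc]; omega
      rw [hf, Nat.card_Icc]; omega
    omega

/-- Counting a down-closed filter: if `c` is antitone and `s` is a "threshold", the
number of `i ∈ [1, K]` with `k ≤ c i` is `s`. -/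
lemma card_filter_threshold {c : ℕ → ℕ} (hc : Antitone c) {k K s : ℕ} (hsK : s ≤ K)
    (h1 : 1 ≤ s → k ≤ c s) (h2 : s + 1 ≤ K → c (s + 1) < k) :
    ((Icc 1 K).filter (fun i => k ≤ c i)).card = s := by
  have : (Icc 1 K).filter (fun i => k ≤ c i) = Icc 1 s := by
    ext i
    simp only [mem_filter, mem_Icc]
    constructor
    · rintro ⟨⟨hi1, hiK⟩, hki⟩
      refine ⟨hi1, ?_⟩
      by_contra hs
      push_neg at hs
      have : c i ≤ c (s + 1) := hc (by omega)
      have := h2 (by omega)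
      omega
    · rintro ⟨hi1, his⟩
      have : c s ≤ c i := hc (by omega)
      have := h1 (by omega)
      exact ⟨⟨hi1, by omega⟩, by omega⟩
  rw [this, Nat.card_Icc]; omega

lemma cnt_map_Icc (m : ℕ) (f : ℕ → ℕ) (v : ℕ) :
    cnt ((Icc 1 m).val.map f) v = ((Icc 1 m).filter (fun i => v ≤ f i)).card := by
  classical
  rw [cnt, Multiset.countP_map]
  rfl

section GF
open scoped Classical
open Finset.HasAntidiagonal
variable {α : Type*}

noncomputable section

/-- A convenience constructor for the power series whose coefficients indicate a subset. -/
def indicatorSeries (α : Type*) [Semiring α] (s : Set ℕ) : PowerSeries α :=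
  PowerSeries.mk fun n => if n ∈ s then 1 else 0

theorem coeff_indicator (s : Set ℕ) [Semiring α] (n : ℕ) :
    coeff (R := α) n (indicatorSeries _ s) = if n ∈ s then 1 else 0 :=
  coeff_mk _ _

theorem coeff_indicator_pos (s : Set ℕ) [Semiring α] (n : ℕ) (h : n ∈ s) :
    coeff (R := α) n (indicatorSeries _ s) = 1 := by rw [coeff_indicator, if_pos h]

theorem coeff_indicator_neg (s : Set ℕ) [Semiring α] (n : ℕ) (h : n ∉ s) :
    coeff (R := α) n (indicatorSeries _ s) = 0 := by rw [coeff_indicator, if_neg h]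

theorem constantCoeff_indicator (s : Set ℕ) [Semiring α] :
    constantCoeff (R := α) (indicatorSeries _ s) = if 0 ∈ s then 1 else 0 :=
  rfl

-- The main workhorse of the partition theorem proof.
theorem partialGF_prop (α : Type*) [CommSemiring α] (n : ℕ) (s : Finset ℕ) (hs : ∀ i ∈ s, 0 < i)
    (c : ℕ → Set ℕ) (hc : ∀ i, i ∉ s → 0 ∈ c i) :
    #{p : n.Partition | (∀ j, p.parts.count j ∈ c j) ∧ ∀ j ∈ p.parts, j ∈ s} =
      coeff (R := α) n (∏ i ∈ s, indicatorSeries α ((· * i) '' c i)) := by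
  simp_rw [coeff_prod, coeff_indicator, prod_boole, sum_boole]
  apply congr_arg
  simp only [mem_univ, forall_true_left, not_and, not_forall, exists_prop,
    Set.mem_image, not_exists]
  set φ : (a : Nat.Partition n) →
    a ∈ filter (fun p ↦ (∀ (j : ℕ), Multiset.count j p.parts ∈ c j) ∧ ∀ j ∈ p.parts, j ∈ s) univ →
    ℕ →₀ ℕ := fun p _ => {
      toFun := fun i => Multiset.count i p.parts • i
      support := Finset.filter (fun i => i ≠ 0) p.parts.toFinset
      mem_support_toFun := fun a => by
        simp only [smul_eq_mul, ne_eq, mul_eq_zero, Multiset.count_eq_zero]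
        rw [not_or, not_not]
        simp only [Multiset.mem_toFinset, not_not, mem_filter] }
  refine Finset.card_bij φ ?_ ?_ ?_
  · intro a ha
    simp only [φ, not_forall, not_exists, not_and, exists_prop, mem_filter]
    rw [mem_finsuppAntidiag]
    dsimp only [ne_eq, smul_eq_mul, id_eq, eq_mpr_eq_cast, le_eq_subset, Finsupp.coe_mk]
    simp only [mem_univ, forall_true_left, not_and, not_forall, exists_prop,
      mem_filter, true_and] at ha
    refine ⟨⟨?_, fun i ↦ ?_⟩, fun i _ ↦ ⟨a.parts.count i, ha.1 i, rfl⟩⟩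
    · conv_rhs => simp [← a.parts_sum]
      rw [sum_multiset_count_of_subset _ s]
      · simp only [smul_eq_mul]
      · intro i
        simp only [Multiset.mem_toFinset, not_not, mem_filter]
        apply ha.2
    · simp only [ne_eq, Multiset.mem_toFinset, not_not, mem_filter, and_imp]
      exact fun hi _ ↦ ha.2 i hi
  · intro p₁ hp₁ p₂ hp₂ h
    apply Nat.Partition.ext
    simp only [true_and, mem_univ, mem_filter] at hp₁ hp₂
    ext i
    simp only [φ, ne_eq, Multiset.mem_toFinset, not_not, smul_eq_mul, Finsupp.mk.injEq] at h
    by_cases hi : i = 0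
    · rw [hi]
      rw [Multiset.count_eq_zero_of_notMem]
      · rw [Multiset.count_eq_zero_of_notMem]
        intro a; exact Nat.lt_irrefl 0 (hs 0 (hp₂.2 0 a))
      intro a; exact Nat.lt_irrefl 0 (hs 0 (hp₁.2 0 a))
    · rw [← mul_left_inj' hi]
      rw [funext_iff] at h
      exact h.2 i
  · simp only [φ, mem_filter, mem_finsuppAntidiag, mem_univ, exists_prop, true_and, and_assoc]
    rintro f ⟨hf, hf₃, hf₄⟩
    have hf' : f ∈ finsuppAntidiag s n := mem_finsuppAntidiag.mpr ⟨hf, hf₃⟩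
    simp only [mem_finsuppAntidiag] at hf'
    refine ⟨⟨∑ i ∈ s, Multiset.replicate (f i / i) i, ?_, ?_⟩, ?_, ?_, ?_⟩
    · intro i hi
      simp only [exists_prop, Multiset.mem_sum, mem_map, Function.Embedding.coeFn_mk] at hi
      rcases hi with ⟨t, ht, z⟩
      apply hs
      rwa [Multiset.eq_of_mem_replicate z]
    · simp_rw [Multiset.sum_sum, Multiset.sum_replicate, Nat.nsmul_eq_mul]
      rw [← hf'.1]
      refine sum_congr rfl fun i hi => Nat.div_mul_cancel ?_
      rcases hf₄ i hi with ⟨w, _, hw₂⟩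
      rw [← hw₂]
      exact dvd_mul_left _ _
    · intro i
      simp_rw [Multiset.count_sum', Multiset.count_replicate, sum_ite_eq']
      split_ifs with h
      · rcases hf₄ i h with ⟨w, hw₁, hw₂⟩
        rwa [← hw₂, Nat.mul_div_cancel _ (hs i h)]
      · exact hc _ h
    · intro i hi
      rw [Multiset.mem_sum] at hi
      rcases hi with ⟨j, hj₁, hj₂⟩
      rwa [Multiset.eq_of_mem_replicate hj₂]
    · ext i
      simp_rw [Multiset.count_sum', Multiset.count_replicate, sum_ite_eq']
      simp only [ne_eq, Multiset.mem_toFinset, not_not, smul_eq_mul, ite_mul,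
        zero_mul, Finsupp.coe_mk]
      split_ifs with h
      · apply Nat.div_mul_cancel
        rcases hf₄ i h with ⟨w, _, hw₂⟩
        apply Dvd.intro_left _ hw₂
      · apply symm
        rw [← Finsupp.notMem_support_iff]
        exact notMem_mono hf'.2 h


end
end GF

section GF2
open scoped Classical

lemma oneMinusXInv_eq {k : ℕ} (hk : 1 ≤ k) :
    oneMinusXInv k = indicatorSeries ℤ {j | k ∣ j} := by
  set f : PowerSeries ℤ := 1 - X ^ k with hf
  have hconst : constantCoeff f = ((1 : ℤˣ) : ℤ) := by
    simp [hf, zero_pow (by omega : k ≠ 0), map_sub, map_pow]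
  have hmul : f * indicatorSeries ℤ {j | k ∣ j} = 1 := by
    ext n
    rw [hf, sub_mul, one_mul, map_sub]
    by_cases h : k ≤ n
    · obtain ⟨d, rfl⟩ : ∃ d, n = d + k := ⟨n - k, by omega⟩
      rw [PowerSeries.coeff_X_pow_mul]
      have hdvd : k ∣ d + k ↔ k ∣ d := Nat.dvd_add_self_right
      rw [coeff_indicator, coeff_indicator, PowerSeries.coeff_one]
      have hne : d + k ≠ 0 := by omega
      simp only [Set.mem_setOf_eq, hdvd, hne, if_false]
      by_cases hd : k ∣ d <;> simp [hd]
    · have hzero : (PowerSeries.coeff n) (X ^ k * indicatorSeries ℤ {j | k ∣ j}) = 0 := by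
        refine PowerSeries.X_pow_dvd_iff.mp ⟨_, rfl⟩ n (by omega)
      rw [hzero, sub_zero, coeff_indicator, PowerSeries.coeff_one]
      rcases Nat.eq_zero_or_pos n with rfl | hn
      · simp
      · have : ¬ (k ∣ n) := fun hdvd => absurd (Nat.le_of_dvd hn hdvd) h
        rw [Set.mem_setOf_eq, if_neg this, if_neg (by omega)]
  have hinv := PowerSeries.mul_invOfUnit f 1 hconst
  have : indicatorSeries ℤ {j | k ∣ j} = PowerSeries.invOfUnit f 1 := by
    calc indicatorSeries ℤ {j | k ∣ j}
        = indicatorSeries ℤ {j | k ∣ j} * (f * PowerSeries.invOfUnit f 1) := by rw [hinv, mul_one]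
      _ = (f * indicatorSeries ℤ {j | k ∣ j}) * PowerSeries.invOfUnit f 1 := by ring
      _ = PowerSeries.invOfUnit f 1 := by rw [hmul, one_mul]
  rw [oneMinusXInv, ← this]

/-- number of partitions of `j` with all parts in `[1, m]`. -/
noncomputable def Pm (m j : ℕ) : ℕ :=
  #{p : j.Partition | ∀ x ∈ p.parts, x ∈ Icc 1 m}

lemma coeff_prod_oneMinusXInv (m j : ℕ) :
    PowerSeries.coeff j (∏ k ∈ Icc 1 m, oneMinusXInv k) = (Pm m j : ℤ) := by
  have h1 : ∀ k ∈ Icc 1 m, oneMinusXInv k = indicatorSeries ℤ ((· * k) '' Set.univ) := by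
    intro k hk
    have himg : ((· * k) '' Set.univ : Set ℕ) = {j | k ∣ j} := by
      ext x
      simp only [Set.image_univ, Set.mem_range, Set.mem_setOf_eq]
      constructor
      · rintro ⟨a, rfl⟩; exact Dvd.intro_left a rfl
      · rintro ⟨a, rfl⟩; exact ⟨a, mul_comm a k⟩
    rw [oneMinusXInv_eq (mem_Icc.mp hk).1, himg]
  rw [Finset.prod_congr rfl h1,
    ← partialGF_prop ℤ j (Icc 1 m) (fun i hi => (mem_Icc.mp hi).1) (fun _ => Set.univ)
      (fun _ _ => trivial)]
  rw [Pm]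
  norm_cast
  congr 1
  apply Finset.filter_congr
  intro p _
  simp

lemma coeff_durfeeTerm_of_lt (m n : ℕ) (h : n < m ^ 2) :
    PowerSeries.coeff n (durfeeTerm m) = 0 :=
  PowerSeries.X_pow_dvd_iff.mp ⟨_, rfl⟩ n h

lemma coeff_durfeeTerm (m n : ℕ) (h : m ^ 2 ≤ n) :
    PowerSeries.coeff n (durfeeTerm m) =
      ∑ ab ∈ Finset.HasAntidiagonal.antidiagonal (n - m ^ 2), (Pm m ab.1 * Pm m ab.2 : ℤ) := by
  have hsq : (∏ k ∈ Icc 1 m, (oneMinusXInv k) ^ 2) =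
      (∏ k ∈ Icc 1 m, oneMinusXInv k) * (∏ k ∈ Icc 1 m, oneMinusXInv k) := by
    rw [← Finset.prod_mul_distrib]
    exact Finset.prod_congr rfl fun k _ => sq (oneMinusXInv k)
  obtain ⟨d, rfl⟩ : ∃ d, n = d + m ^ 2 := ⟨n - m ^ 2, by omega⟩
  rw [durfeeTerm, hsq, PowerSeries.coeff_X_pow_mul, PowerSeries.coeff_mul]
  have hd : d + m ^ 2 - m ^ 2 = d := by omega
  rw [hd]
  exact Finset.sum_congr rfl fun ab _ => by rw [coeff_prod_oneMinusXInv, coeff_prod_oneMinusXInv]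

end GF2

section Comb
open scoped Classical

lemma cnt_ext {M N : Multiset ℕ} (h : ∀ v, cnt M v = cnt N v) : M = N := by
  ext a
  have h1 := h a
  have e1 := cnt_eq_succ_add_count M a
  have e2 := cnt_eq_succ_add_count N a
  have h2 := h (a + 1)
  omega

lemma cnt_replicate (c v i : ℕ) : cnt (Multiset.replicate c v) i = if i ≤ v then c else 0 := by
  induction c with
  | zero => simp [cnt]
  | succ c ih =>
    rw [Multiset.replicate_succ]
    simp only [cnt, Multiset.countP_cons] at *
    split_ifs at * <;> omega

lemma cnt_filter_lt (M : Multiset ℕ) {i m : ℕ} (h : i ≤ m) :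
    cnt (M.filter (· < m)) i + cnt M m = cnt M i := by
  simp only [cnt, Multiset.countP_filter]
  have key := Multiset.filter_add_filter (fun x => i ≤ x ∧ x < m) (fun x => m ≤ x) M
  have h1 : Multiset.filter (fun a => (i ≤ a ∧ a < m) ∨ m ≤ a) M
      = Multiset.filter (fun x => i ≤ x) M :=
    Multiset.filter_congr (fun x _ => by constructor <;> intro hh <;> omega)
  have h2 : Multiset.filter (fun a => (i ≤ a ∧ a < m) ∧ m ≤ a) M = 0 := by
    rw [Multiset.filter_eq_nil]; rintro x _ ⟨⟨_, h3⟩, h4⟩; omega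
  rw [h1, h2, add_zero] at key
  simp only [Multiset.countP_eq_card_filter]
  rw [← key, Multiset.card_add]

lemma cnt_filter_pos (M : Multiset ℕ) {i : ℕ} (hi : 1 ≤ i) :
    cnt (M.filter (0 < ·)) i = cnt M i := by
  simp only [cnt, Multiset.countP_eq_card_filter, Multiset.filter_filter]
  congr 1
  exact Multiset.filter_congr (fun x _ => by constructor <;> intro hh <;> omega)

/-- the number of `i ∈ [1, m]` with `k ≤ cnt M i`, as a function of `k`, is antitone. -/
lemma w_anti (m : ℕ) (c : ℕ → ℕ) :
    Antitone (fun k => ((Icc 1 m).filter fun i => k ≤ c i).card) := by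
  intro k k' h
  exact Finset.card_le_card (Finset.monotone_filter_right _ (fun i _ hi => h.trans hi))

/-- Key conjugation identity, direction 1:
counting `k` such that the conjugate count is at least `v` recovers `cnt M v`. -/
lemma conj_count {M : Multiset ℕ} {m : ℕ} (hM : ∀ x ∈ M, x ∈ Icc 1 m) {K : ℕ}
    (hK : Multiset.card M ≤ K) {v : ℕ} (hv : 1 ≤ v) :
    ((Icc 1 K).filter fun k => v ≤ ((Icc 1 m).filter fun i => k ≤ cnt M i).card).card
      = cnt M v := by
  set w : ℕ → ℕ := fun k => ((Icc 1 m).filter fun i => k ≤ cnt M i).card with hw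
  apply card_filter_threshold (w_anti m (cnt M))
  · exact le_trans (cnt_le_card M v) hK
  · intro h1
    -- some element of M is ≥ v, hence v ≤ m
    have hvm : v ≤ m := by
      have : 0 < Multiset.card (Multiset.filter (fun x => v ≤ x) M) := by
        have h1' : 1 ≤ Multiset.card (Multiset.filter (fun x => v ≤ x) M) := by
          simpa [cnt, Multiset.countP_eq_card_filter] using h1
        omega
      rw [Multiset.card_pos_iff_exists_mem] at this
      obtain ⟨x, hx⟩ := this
      rw [Multiset.mem_filter] at hx
      exact le_trans hx.2 (mem_Icc.mp (hM x hx.1)).2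
    have hsub : Icc 1 v ⊆ (Icc 1 m).filter fun i => cnt M v ≤ cnt M i := by
      intro i hi
      rw [mem_Icc] at hi
      rw [mem_filter, mem_Icc]
      exact ⟨⟨hi.1, le_trans hi.2 hvm⟩, cnt_anti M hi.2⟩
    calc v = (Icc 1 v).card := by rw [Nat.card_Icc]; omega
    _ ≤ _ := Finset.card_le_card hsub
  · intro _
    have hsub : ((Icc 1 m).filter fun i => cnt M v + 1 ≤ cnt M i) ⊆ Icc 1 (v - 1) := by
      intro k hk
      rw [mem_filter, mem_Icc] at hk
      rw [mem_Icc]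
      refine ⟨hk.1.1, ?_⟩
      by_contra hc
      push_neg at hc
      have : cnt M k ≤ cnt M v := cnt_anti M (by omega)
      omega
    calc ((Icc 1 m).filter fun i => cnt M v + 1 ≤ cnt M i).card
        ≤ (Icc 1 (v - 1)).card := Finset.card_le_card hsub
    _ < v := by rw [Nat.card_Icc]; omega

/-- Key conjugation identity, direction 2. -/
lemma conj_count' {f : ℕ → ℕ} (hf : Antitone f) {K m : ℕ} (hfm : f 1 ≤ m)
    (hfK : ∀ j, 1 ≤ f j → j ≤ K) {j : ℕ} (hj : 1 ≤ j) :
    ((Icc 1 m).filter fun i => j ≤ ((Icc 1 K).filter fun k => i ≤ f k).card).card = f j := by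
  apply card_filter_threshold (w_anti K f)
  · exact le_trans (hf hj) hfm
  · intro h1
    have hjK : j ≤ K := hfK j h1
    have hsub : Icc 1 j ⊆ (Icc 1 K).filter fun k => f j ≤ f k := by
      intro k hk
      rw [mem_Icc] at hk
      rw [mem_filter, mem_Icc]
      exact ⟨⟨hk.1, le_trans hk.2 hjK⟩, hf hk.2⟩
    calc j = (Icc 1 j).card := by rw [Nat.card_Icc]; omega
    _ ≤ _ := Finset.card_le_card hsub
  · intro _
    have hsub : ((Icc 1 K).filter fun k => f j + 1 ≤ f k) ⊆ Icc 1 (j - 1) := by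
      intro k hk
      rw [mem_filter, mem_Icc] at hk
      rw [mem_Icc]
      refine ⟨hk.1.1, ?_⟩
      by_contra hc
      push_neg at hc
      have : f k ≤ f j := hf (by omega)
      omega
    calc ((Icc 1 K).filter fun k => f j + 1 ≤ f k).card
        ≤ (Icc 1 (j - 1)).card := Finset.card_le_card hsub
    _ < j := by rw [Nat.card_Icc]; omega

end Comb

section Comb2
open scoped Classical

lemma cnt_ext' {M N : Multiset ℕ} (h0M : 0 ∉ M) (h0N : 0 ∉ N)
    (h : ∀ v, 1 ≤ v → cnt M v = cnt N v) : M = N := by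
  ext a
  rcases Nat.eq_zero_or_pos a with rfl | ha
  · rw [Multiset.count_eq_zero_of_notMem h0M, Multiset.count_eq_zero_of_notMem h0N]
  · have h1 := h a ha
    have h2 := h (a + 1) (by omega)
    have e1 := cnt_eq_succ_add_count M a
    have e2 := cnt_eq_succ_add_count N a
    omega

/-- the rows of a Durfee decomposition: `m` rows of sizes `m + cnt M i`, `i ∈ [1, m]`. -/
noncomputable def rowsOf (m : ℕ) (M : Multiset ℕ) : Multiset ℕ :=
  (Icc 1 m).val.map (fun i => m + cnt M i)

lemma mem_rowsOf {m x : ℕ} {M : Multiset ℕ} (hx : x ∈ rowsOf m M) : 1 ≤ m ∧ m ≤ x := by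
  rw [rowsOf, Multiset.mem_map] at hx
  obtain ⟨i, hi, rfl⟩ := hx
  have h2 := Finset.mem_Icc.mp (Finset.mem_def.mpr hi)
  omega

lemma cnt_rowsOf_le {m : ℕ} (M : Multiset ℕ) {v : ℕ} (hv : v ≤ m) :
    cnt (rowsOf m M) v = m := by
  rw [rowsOf, cnt_map_Icc]
  have h : (Icc 1 m).filter (fun i => v ≤ m + cnt M i) = Icc 1 m :=
    Finset.filter_true_of_mem (fun i _ => by omega)
  rw [h, Nat.card_Icc]
  omega

lemma cnt_rowsOf_add (m : ℕ) (M : Multiset ℕ) (j : ℕ) :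
    cnt (rowsOf m M) (m + j) = ((Icc 1 m).filter fun i => j ≤ cnt M i).card := by
  rw [rowsOf, cnt_map_Icc]
  congr 1
  exact Finset.filter_congr (fun i _ => by constructor <;> intro h <;> omega)

lemma sum_rowsOf (m : ℕ) (M : Multiset ℕ) :
    (rowsOf m M).sum = m * m + ∑ i ∈ Icc 1 m, cnt M i := by
  rw [rowsOf]
  have h : ((Icc 1 m).val.map (fun i => m + cnt M i)).sum = ∑ i ∈ Icc 1 m, (m + cnt M i) := rfl
  rw [h, Finset.sum_add_distrib, Finset.sum_const, Nat.card_Icc, smul_eq_mul,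
    Nat.add_sub_cancel]

/-- The Durfee square size of a partition. -/
noncomputable def durfee {n : ℕ} (P : n.Partition) : ℕ :=
  Nat.findGreatest (fun i => i ≤ cnt P.parts i) n

lemma parts_mem_Icc {n : ℕ} (P : n.Partition) : ∀ x ∈ P.parts, x ∈ Icc 1 n := by
  intro x hx
  rw [mem_Icc]
  refine ⟨P.parts_pos hx, ?_⟩
  calc x ≤ P.parts.sum := Multiset.le_sum_of_mem hx
  _ = n := P.parts_sum

lemma card_parts_le {n : ℕ} (P : n.Partition) : Multiset.card P.parts ≤ n := by
  have h := Multiset.card_nsmul_le_sum (s := P.parts) (a := 1) (fun x hx => P.parts_pos hx)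
  simpa [P.parts_sum] using h

lemma cnt_parts_le {n : ℕ} (P : n.Partition) (v : ℕ) : cnt P.parts v ≤ n :=
  le_trans (cnt_le_card _ _) (card_parts_le P)

lemma cnt_parts_eq_zero {n : ℕ} (P : n.Partition) {v : ℕ} (hv : n < v) : cnt P.parts v = 0 :=
  cnt_eq_zero _ _ (fun x hx => lt_of_le_of_lt (mem_Icc.mp (parts_mem_Icc P x hx)).2 hv)

lemma durfee_le {n : ℕ} (P : n.Partition) : durfee P ≤ n := Nat.findGreatest_le n

lemma durfee_spec {n : ℕ} (P : n.Partition) : durfee P ≤ cnt P.parts (durfee P) := by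
  rw [durfee]
  exact Nat.findGreatest_spec (P := fun i => i ≤ cnt P.parts i) (Nat.zero_le n) (Nat.zero_le _)

lemma durfee_succ_le {n : ℕ} (P : n.Partition) : cnt P.parts (durfee P + 1) ≤ durfee P := by
  by_cases h : durfee P + 1 ≤ n
  · rw [durfee] at h ⊢
    have hg := Nat.findGreatest_is_greatest (P := fun i => i ≤ cnt P.parts i) (n := n)
      (by omega) h
    simp only [not_le] at hg
    omega
  · have hd : durfee P = n := le_antisymm (durfee_le P) (by omega)
    have h0 := cnt_parts_eq_zero P (v := durfee P + 1) (by omega)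
    omega

lemma durfee_char {n : ℕ} (P : n.Partition) {m : ℕ} (h1 : m ≤ cnt P.parts m)
    (h2 : cnt P.parts (m + 1) ≤ m) : durfee P = m := by
  rw [durfee, Nat.findGreatest_eq_iff]
  have hmn : m ≤ n := le_trans h1 (cnt_parts_le P m)
  refine ⟨hmn, fun _ => h1, fun j hj hjn hP => ?_⟩
  have h3 : cnt P.parts j ≤ cnt P.parts (m + 1) := cnt_anti _ (by omega)
  omega

lemma durfee_sq_le {n : ℕ} (P : n.Partition) : durfee P ^ 2 ≤ n := by
  set m := durfee P with hm
  have h1 : ∀ i ∈ Icc 1 m, m ≤ cnt P.parts i := fun i hi =>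
    le_trans (durfee_spec P) (cnt_anti _ (mem_Icc.mp hi).2)
  calc m ^ 2 = ∑ _i ∈ Icc 1 m, m := by
        rw [Finset.sum_const, Nat.card_Icc, smul_eq_mul, Nat.add_sub_cancel, sq]
  _ ≤ ∑ i ∈ Icc 1 m, cnt P.parts i := Finset.sum_le_sum h1
  _ ≤ ∑ i ∈ Icc 1 n, cnt P.parts i :=
        Finset.sum_le_sum_of_subset (Finset.Icc_subset_Icc_right (durfee_le P))
  _ = P.parts.sum := sum_cnt n _ (parts_mem_Icc P)
  _ = n := P.parts_sum

end Comb2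

section Comb3
open scoped Classical

/-- the parts of `P` strictly below its Durfee square. -/
noncomputable def psi1 {n : ℕ} (P : n.Partition) : Multiset ℕ :=
  P.parts.filter (· < durfee P) +
    Multiset.replicate (cnt P.parts (durfee P) - durfee P) (durfee P)

/-- the conjugate of the partition to the right of the Durfee square of `P`. -/
noncomputable def psi2 {n : ℕ} (P : n.Partition) : Multiset ℕ :=
  ((Icc 1 n).val.map fun k => cnt P.parts (durfee P + k)).filter (0 < ·)

lemma durfee_zero_parts {n : ℕ} (P : n.Partition) (h : durfee P = 0) : P.parts = 0 := by
  have h1 := durfee_succ_le P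
  rw [h] at h1
  norm_num at h1
  by_contra hne
  obtain ⟨x, hx⟩ := Multiset.exists_mem_of_ne_zero hne
  have hp := P.parts_pos hx
  have h2 : 0 < cnt P.parts 1 := by
    rw [cnt, Multiset.countP_eq_card_filter, Multiset.card_pos_iff_exists_mem]
    exact ⟨x, Multiset.mem_filter.mpr ⟨hx, hp⟩⟩
  omega

lemma psi1_mem {n : ℕ} (P : n.Partition) : ∀ x ∈ psi1 P, x ∈ Icc 1 (durfee P) := by
  intro x hx
  rw [psi1, Multiset.mem_add] at hx
  rw [mem_Icc]
  rcases hx with hx | hx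
  · rw [Multiset.mem_filter] at hx
    exact ⟨P.parts_pos hx.1, le_of_lt hx.2⟩
  · have hxe := Multiset.eq_of_mem_replicate hx
    subst hxe
    rcases Nat.eq_zero_or_pos (durfee P) with h0 | h0
    · exfalso
      have hp := durfee_zero_parts P h0
      rw [h0, hp] at hx
      simp [cnt] at hx
    · exact ⟨h0, le_refl _⟩

lemma psi2_mem {n : ℕ} (P : n.Partition) : ∀ x ∈ psi2 P, x ∈ Icc 1 (durfee P) := by
  intro x hx
  rw [psi2, Multiset.mem_filter, Multiset.mem_map] at hx
  obtain ⟨⟨k, hk, rfl⟩, hpos⟩ := hx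
  have hk' := Finset.mem_Icc.mp (Finset.mem_def.mpr hk)
  rw [mem_Icc]
  refine ⟨hpos, ?_⟩
  calc cnt P.parts (durfee P + k) ≤ cnt P.parts (durfee P + 1) := cnt_anti _ (by omega)
  _ ≤ durfee P := durfee_succ_le P

lemma card_psi2_le {n : ℕ} (P : n.Partition) : Multiset.card (psi2 P) ≤ n := by
  calc Multiset.card (psi2 P)
      ≤ Multiset.card ((Icc 1 n).val.map fun k => cnt P.parts (durfee P + k)) :=
        Multiset.card_le_card (Multiset.filter_le _ _)
  _ = n := by rw [Multiset.card_map]; simp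

/-- KEY LEMMA (Durfee reconstruction): every partition is recovered from its data. -/
lemma rowsOf_psi_eq {n : ℕ} (P : n.Partition) :
    rowsOf (durfee P) (psi2 P) + psi1 P = P.parts := by
  have hC1 : durfee P ≤ cnt P.parts (durfee P) := durfee_spec P
  have hC2 : cnt P.parts (durfee P + 1) ≤ durfee P := durfee_succ_le P
  apply cnt_ext'
  · intro h0
    rw [Multiset.mem_add] at h0
    rcases h0 with h0 | h0
    · have := mem_rowsOf h0; omega
    · have := mem_Icc.mp (psi1_mem P 0 h0); omega
  · intro h0; exact absurd (P.parts_pos h0) (by omega)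
  intro v hv
  rw [cnt_add]
  have hpsi2 : ∀ i, 1 ≤ i →
      cnt (psi2 P) i = ((Icc 1 n).filter fun k => i ≤ cnt P.parts (durfee P + k)).card := by
    intro i hi
    rw [psi2, cnt_filter_pos _ hi, cnt_map_Icc]
  by_cases hvm : v ≤ durfee P
  · rw [cnt_rowsOf_le _ hvm]
    rw [psi1, cnt_add, cnt_replicate, if_pos hvm]
    have hflt := cnt_filter_lt P.parts (m := durfee P) hvm
    have hmono : cnt P.parts (durfee P) ≤ cnt P.parts v := cnt_anti _ hvm
    omega
  · push_neg at hvm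
    obtain ⟨j, hj1, rfl⟩ : ∃ j, 1 ≤ j ∧ v = durfee P + j :=
      ⟨v - durfee P, by omega, by omega⟩
    have hpsi1 : cnt (psi1 P) (durfee P + j) = 0 := by
      apply cnt_eq_zero
      intro x hx
      have := mem_Icc.mp (psi1_mem P x hx)
      omega
    rw [hpsi1, cnt_rowsOf_add, add_zero]
    have hcong : (Icc 1 (durfee P)).filter (fun i => j ≤ cnt (psi2 P) i)
        = (Icc 1 (durfee P)).filter
            (fun i => j ≤ ((Icc 1 n).filter fun k => i ≤ cnt P.parts (durfee P + k)).card) := by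
      apply Finset.filter_congr
      intro i hi
      rw [hpsi2 i (mem_Icc.mp hi).1]
    rw [hcong]
    exact conj_count' (f := fun k => cnt P.parts (durfee P + k))
      (fun a b hab => cnt_anti _ (by omega)) hC2
      (fun j' hj' => by
        have hj'' : 1 ≤ cnt P.parts (durfee P + j') := hj'
        by_contra hc
        push_neg at hc
        have h0 := cnt_parts_eq_zero P (v := durfee P + j') (by omega)
        omega) hj1

lemma psi_sum {n : ℕ} (P : n.Partition) :
    durfee P * durfee P + (psi2 P).sum + (psi1 P).sum = n := by
  have h := congrArg Multiset.sum (rowsOf_psi_eq P)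
  rw [Multiset.sum_add, sum_rowsOf, sum_cnt (durfee P) _ (psi2_mem P), P.parts_sum] at h
  omega

lemma cnt_Q_gt {m : ℕ} {M₁ : Multiset ℕ} (M₂ : Multiset ℕ)
    (hM₁ : ∀ x ∈ M₁, x ∈ Icc 1 m) {j : ℕ} (hj : 1 ≤ j) :
    cnt (rowsOf m M₂ + M₁) (m + j) = ((Icc 1 m).filter fun i => j ≤ cnt M₂ i).card := by
  rw [cnt_add, cnt_rowsOf_add,
    cnt_eq_zero M₁ _ (fun x hx => by have := mem_Icc.mp (hM₁ x hx); omega), add_zero]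

lemma durfee_Q {n : ℕ} (P : n.Partition) {m : ℕ} {M₁ M₂ : Multiset ℕ}
    (hQ : P.parts = rowsOf m M₂ + M₁) (hM₁ : ∀ x ∈ M₁, x ∈ Icc 1 m) : durfee P = m := by
  apply durfee_char
  · rw [hQ, cnt_add, cnt_rowsOf_le _ (le_refl m)]; omega
  · rw [hQ, cnt_Q_gt M₂ hM₁ (le_refl 1)]
    calc ((Icc 1 m).filter fun i => 1 ≤ cnt M₂ i).card
        ≤ (Icc 1 m).card := Finset.card_le_card (Finset.filter_subset _ _)
    _ = m := by rw [Nat.card_Icc]; omega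

lemma psi1_Q {n : ℕ} (P : n.Partition) {m : ℕ} {M₁ M₂ : Multiset ℕ}
    (hQ : P.parts = rowsOf m M₂ + M₁) (hM₁ : ∀ x ∈ M₁, x ∈ Icc 1 m) : psi1 P = M₁ := by
  have hd : durfee P = m := durfee_Q P hQ hM₁
  rw [psi1, hd, hQ]
  have hfilter : (rowsOf m M₂ + M₁).filter (· < m) = M₁.filter (· < m) := by
    rw [Multiset.filter_add]
    have h0 : (rowsOf m M₂).filter (· < m) = 0 := by
      rw [Multiset.filter_eq_nil]
      intro x hx hlt
      have := mem_rowsOf hx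
      omega
    rw [h0, zero_add]
  have hcnt : cnt (rowsOf m M₂ + M₁) m = m + cnt M₁ m := by
    rw [cnt_add, cnt_rowsOf_le _ le_rfl]
  rw [hfilter, hcnt]
  have hsub : m + cnt M₁ m - m = cnt M₁ m := by omega
  rw [hsub]
  apply cnt_ext'
  · intro h0
    rw [Multiset.mem_add] at h0
    rcases h0 with h0 | h0
    · rw [Multiset.mem_filter] at h0
      have := mem_Icc.mp (hM₁ 0 h0.1); omega
    · have h1 := Multiset.eq_of_mem_replicate h0
      subst h1
      -- so m = 0; then M₁ is empty and cnt M₁ 0 = 0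
      have hM₁0 : M₁ = 0 := by
        by_contra hne
        obtain ⟨x, hx⟩ := Multiset.exists_mem_of_ne_zero hne
        have := mem_Icc.mp (hM₁ x hx); omega
      rw [hM₁0] at h0
      simp [cnt] at h0
  · intro h0
    have := mem_Icc.mp (hM₁ 0 h0); omega
  intro v hv
  rw [cnt_add, cnt_replicate]
  by_cases hvm : v ≤ m
  · have hflt := cnt_filter_lt M₁ (m := m) hvm
    rw [if_pos hvm]
    have hmono : cnt M₁ m ≤ cnt M₁ v := cnt_anti _ hvm
    omega
  · rw [if_neg hvm]
    have h1 : cnt (M₁.filter (· < m)) v = 0 := by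
      apply cnt_eq_zero
      intro x hx
      rw [Multiset.mem_filter] at hx
      have := hx.2; omega
    have h2 : cnt M₁ v = 0 := by
      apply cnt_eq_zero
      intro x hx
      have := mem_Icc.mp (hM₁ x hx); omega
    omega

lemma psi2_Q {n : ℕ} (P : n.Partition) {m : ℕ} {M₁ M₂ : Multiset ℕ}
    (hQ : P.parts = rowsOf m M₂ + M₁) (hM₁ : ∀ x ∈ M₁, x ∈ Icc 1 m)
    (hM₂ : ∀ x ∈ M₂, x ∈ Icc 1 m) (hcard : Multiset.card M₂ ≤ n) : psi2 P = M₂ := by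
  have hd : durfee P = m := durfee_Q P hQ hM₁
  rw [psi2, hd]
  apply cnt_ext'
  · intro h0
    rw [Multiset.mem_filter] at h0
    exact absurd h0.2 (by omega)
  · intro h0
    have := mem_Icc.mp (hM₂ 0 h0); omega
  intro v hv
  rw [cnt_filter_pos _ hv, cnt_map_Icc]
  have hcong : (Icc 1 n).filter (fun k => v ≤ cnt P.parts (m + k))
      = (Icc 1 n).filter (fun k => v ≤ ((Icc 1 m).filter fun i => k ≤ cnt M₂ i).card) := by
    apply Finset.filter_congr
    intro k hk
    rw [hQ, cnt_Q_gt M₂ hM₁ (mem_Icc.mp hk).1]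
  rw [hcong]
  exact conj_count hM₂ hcard hv

lemma sum_Q {m : ℕ} (M₁ M₂ : Multiset ℕ) (hM₂ : ∀ x ∈ M₂, x ∈ Icc 1 m) :
    (rowsOf m M₂ + M₁).sum = m * m + M₂.sum + M₁.sum := by
  rw [Multiset.sum_add, sum_rowsOf, sum_cnt m M₂ hM₂, add_assoc]

lemma pos_Q {m : ℕ} {M₁ M₂ : Multiset ℕ} (hM₁ : ∀ x ∈ M₁, x ∈ Icc 1 m) :
    ∀ x ∈ rowsOf m M₂ + M₁, 0 < x := by
  intro x hx
  rw [Multiset.mem_add] at hx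
  rcases hx with hx | hx
  · have := mem_rowsOf hx; omega
  · have := mem_Icc.mp (hM₁ x hx); omega

end Comb3

section Assemble
open scoped Classical

/-- data for the Durfee decomposition: `(m, a, b)` together with partitions of `a` and `b`. -/
abbrev DDat : Type := Σ y : Σ _m : ℕ, ℕ × ℕ, (y.2.1.Partition × y.2.2.Partition)

/-- the finset of Durfee data for `n`. -/
noncomputable def BSet (n : ℕ) : Finset DDat :=
  ((range (n + 1)).sigma fun m =>
      if m ^ 2 ≤ n then antidiagonal (n - m ^ 2) else (∅ : Finset (ℕ × ℕ))).sigma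
    fun y => (univ.filter fun p : y.2.1.Partition => ∀ x ∈ p.parts, x ∈ Icc 1 y.1) ×ˢ
             (univ.filter fun p : y.2.2.Partition => ∀ x ∈ p.parts, x ∈ Icc 1 y.1)

lemma BSet_extract {n : ℕ} {x : DDat} (hx : x ∈ BSet n) :
    x.1.1 ^ 2 ≤ n ∧ x.1.2.1 + x.1.2.2 = n - x.1.1 ^ 2 ∧
      (∀ v ∈ x.2.1.parts, v ∈ Icc 1 x.1.1) ∧ (∀ v ∈ x.2.2.parts, v ∈ Icc 1 x.1.1) := by
  obtain ⟨⟨m, a, b⟩, p₁, p₂⟩ := x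
  rw [BSet, Finset.mem_sigma, Finset.mem_sigma] at hx
  obtain ⟨⟨hm, hab⟩, hprod⟩ := hx
  rw [Finset.mem_product, Finset.mem_filter, Finset.mem_filter] at hprod
  by_cases hsq : m ^ 2 ≤ n
  · rw [if_pos hsq, Finset.HasAntidiagonal.mem_antidiagonal] at hab
    exact ⟨hsq, hab, hprod.1.2, hprod.2.2⟩
  · rw [if_neg hsq] at hab
    exact absurd hab (Finset.notMem_empty _)

/-- from Durfee data to a partition of `n`. -/
noncomputable def phiFun (n : ℕ) (x : DDat) (hx : x ∈ BSet n) : Nat.Partition n where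
  parts := rowsOf x.1.1 x.2.2.parts + x.2.1.parts
  parts_pos := fun {i} hi => pos_Q (BSet_extract hx).2.2.1 i hi
  parts_sum := by
    obtain ⟨hsq, hab, hM₁, hM₂⟩ := BSet_extract hx
    rw [sum_Q _ _ hM₂, x.2.2.parts_sum, x.2.1.parts_sum]
    have hpow : x.1.1 ^ 2 = x.1.1 * x.1.1 := sq x.1.1
    omega

/-- from a partition of `n` to its Durfee data. -/
noncomputable def psiFun (n : ℕ) (P : Nat.Partition n) : DDat :=
  ⟨⟨durfee P, (psi1 P).sum, (psi2 P).sum⟩,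
    ⟨psi1 P, fun {i} hi => (mem_Icc.mp (psi1_mem P i hi)).1, rfl⟩,
    ⟨psi2 P, fun {i} hi => (mem_Icc.mp (psi2_mem P i hi)).1, rfl⟩⟩

lemma psiFun_mem (n : ℕ) (P : Nat.Partition n) : psiFun n P ∈ BSet n := by
  rw [BSet, psiFun, Finset.mem_sigma, Finset.mem_sigma]
  dsimp only
  refine ⟨⟨?_, ?_⟩, ?_⟩
  · rw [Finset.mem_range]
    have := durfee_le P
    omega
  · rw [if_pos (durfee_sq_le P), Finset.HasAntidiagonal.mem_antidiagonal]
    have h := psi_sum P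
    have hpow : durfee P ^ 2 = durfee P * durfee P := sq (durfee P)
    omega
  · rw [Finset.mem_product, Finset.mem_filter, Finset.mem_filter]
    exact ⟨⟨Finset.mem_univ _, psi1_mem P⟩, ⟨Finset.mem_univ _, psi2_mem P⟩⟩

lemma DDat_ext {m m' a a' b b' : ℕ} {p₁ : a.Partition} {p₂ : b.Partition}
    {q₁ : a'.Partition} {q₂ : b'.Partition}
    (hm : m = m') (hpq₁ : p₁.parts = q₁.parts) (hpq₂ : p₂.parts = q₂.parts) :
    (⟨⟨m, a, b⟩, p₁, p₂⟩ : DDat) = ⟨⟨m', a', b'⟩, q₁, q₂⟩ := by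
  have ha : a = a' := by rw [← p₁.parts_sum, ← q₁.parts_sum, hpq₁]
  have hb : b = b' := by rw [← p₂.parts_sum, ← q₂.parts_sum, hpq₂]
  subst hm; subst ha; subst hb
  rw [Nat.Partition.ext hpq₁, Nat.Partition.ext hpq₂]

lemma Pm_eq (m j : ℕ) :
    Pm m j = (univ.filter fun p : j.Partition => ∀ x ∈ p.parts, x ∈ Icc 1 m).card := rfl

lemma card_BSet (n : ℕ) :
    (BSet n).card = ∑ m ∈ range (n + 1),
      if m ^ 2 ≤ n then ∑ ab ∈ antidiagonal (n - m ^ 2), Pm m ab.1 * Pm m ab.2 else 0 := by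
  rw [BSet, Finset.card_sigma, Finset.sum_sigma]
  apply Finset.sum_congr rfl
  intro m _
  by_cases hsq : m ^ 2 ≤ n
  · simp only [if_pos hsq]
    apply Finset.sum_congr rfl
    intro ab _
    rw [Finset.card_product, Pm_eq, Pm_eq]
  · simp only [if_neg hsq, Finset.sum_empty]

lemma partition_card_eq (n : ℕ) :
    Fintype.card (Nat.Partition n) = ∑ m ∈ range (n + 1),
      if m ^ 2 ≤ n then ∑ ab ∈ antidiagonal (n - m ^ 2), Pm m ab.1 * Pm m ab.2 else 0 := by
  have hbij : (univ : Finset (Nat.Partition n)).card = (BSet n).card := by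
    apply Finset.card_bij' (fun P _ => psiFun n P) (fun x hx => phiFun n x hx)
      (fun P _ => psiFun_mem n P) (fun x hx => Finset.mem_univ _)
    · -- left inverse : phiFun (psiFun P) = P
      intro P _
      exact Nat.Partition.ext (rowsOf_psi_eq P)
    · -- right inverse : psiFun (phiFun x) = x
      intro x hx
      obtain ⟨⟨m, a, b⟩, p₁, p₂⟩ := x
      obtain ⟨hsq, hab, hM₁, hM₂⟩ := BSet_extract hx
      dsimp only at hsq hab hM₁ hM₂
      have hQ : (phiFun n ⟨⟨m, a, b⟩, p₁, p₂⟩ hx).parts = rowsOf m p₂.parts + p₁.parts := rfl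
      have hcard : Multiset.card p₂.parts ≤ n := by
        have h1 : Multiset.card p₂.parts ≤ b := card_parts_le p₂
        omega
      rw [psiFun]
      exact DDat_ext (durfee_Q _ hQ hM₁) (psi1_Q _ hQ hM₁) (psi2_Q _ hQ hM₁ hM₂ hcard)
  rw [← Finset.card_univ, hbij, card_BSet]

end Assemble

end DurfeeProof

theorem partitionGF_eq_one_add_sum_durfeeTerms :
    (∀ m n : ℕ, n < m ^ 2 → (PowerSeries.coeff n) (durfeeTerm m) = 0) ∧
      ∀ n : ℕ, (PowerSeries.coeff n) partitionGF =
        ∑ m ∈ Finset.range (n + 1), (PowerSeries.coeff n) (durfeeTerm m) := by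
  constructor
  · exact fun m n h => DurfeeProof.coeff_durfeeTerm_of_lt m n h
  · intro n
    rw [partitionGF, PowerSeries.coeff_mk]
    have hsum : ∀ m ∈ Finset.range (n + 1), (PowerSeries.coeff n) (durfeeTerm m) =
        (if m ^ 2 ≤ n then
          ∑ ab ∈ Finset.HasAntidiagonal.antidiagonal (n - m ^ 2),
            (DurfeeProof.Pm m ab.1 * DurfeeProof.Pm m ab.2 : ℤ) else 0) := by
      intro m _
      by_cases hsq : m ^ 2 ≤ n
      · rw [if_pos hsq, DurfeeProof.coeff_durfeeTerm m n hsq]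
      · rw [if_neg hsq, DurfeeProof.coeff_durfeeTerm_of_lt m n (by omega)]
    rw [Finset.sum_congr rfl hsum, DurfeeProof.partition_card_eq n]
    push_cast [apply_ite (Nat.cast : ℕ → ℤ)]
    rfl
end

section
/- Fix a positive integer m. For every non-negative integer n, the coefficient of q^n in the formal power series q^{m²}·∏_{k=1}^{m}(1−q^k)^{−2} ∈ ℤ⟦q⟧ equals the number of partitions of n whose Durfee square has side length m. -/
/-!
STATEMENT 4: Fix a positive integer m.  For every n ≥ 0, the coefficient of qⁿ in
`q^{m²} ∏_{k=1}^{m} (1-q^k)^{-2} ∈ ℤ⟦q⟧` equals the number of partitions of n whose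
Durfee square has side length m.  (The side length of the Durfee square of λ is the
largest d ≥ 0 such that λ has at least d parts of size at least d.)
-/

open PowerSeries

/-- The Durfee square of the partition `P` of `n` has side length `d`:
`P` has at least `d` parts of size at least `d`, but it is not the case that `P` has
at least `d+1` parts of size at least `d+1`; i.e. `d` is the largest integer `e ≥ 0`
such that `P` has at least `e` parts each of size at least `e`. -/
def HasDurfeeSide {n : ℕ} (P : Nat.Partition n) (d : ℕ) : Prop :=
  d ≤ (P.parts.filter fun p => d ≤ p).card ∧
    ¬ (d + 1 ≤ (P.parts.filter fun p => d + 1 ≤ p).card)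

instance {n : ℕ} (P : Nat.Partition n) (d : ℕ) : Decidable (HasDurfeeSide P d) :=
  inferInstanceAs (Decidable (_ ∧ _))


/-! ### Auxiliary material -/

open PowerSeries Finset
open scoped Classical


noncomputable def indicatorSeries (α : Type*) [Semiring α] (s : Set ℕ) : PowerSeries α :=
  PowerSeries.mk fun n => if n ∈ s then 1 else 0

theorem coeff_indicator (s : Set ℕ) {α : Type*} [Semiring α] (n : ℕ) :
    coeff (R := α) n (indicatorSeries _ s) = if n ∈ s then 1 else 0 :=
  coeff_mk _ _

theorem oneMinusXInv_eq (k : ℕ) (hk : 0 < k) :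
    oneMinusXInv k = indicatorSeries ℤ {j | k ∣ j} := by
  have key : (1 - X ^ k) * indicatorSeries ℤ {j | k ∣ j} = 1 := by
    ext n
    rw [sub_mul, one_mul, map_sub, coeff_indicator, mul_comm,
      PowerSeries.coeff_mul_X_pow', coeff_one]
    simp only [Set.mem_setOf_eq, coeff_indicator]
    rcases Nat.lt_or_ge n k with h | h
    · rw [if_neg (show ¬ k ≤ n by omega)]
      rcases Nat.eq_zero_or_pos n with rfl | hn
      · rw [if_pos (Nat.dvd_zero k), if_pos rfl, sub_zero]
      · rw [if_neg (show ¬ k ∣ n from fun hd => by have := Nat.le_of_dvd hn hd; omega),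
          if_neg (show ¬ n = 0 by omega)]
        ring
    · have hiff : k ∣ n ↔ k ∣ n - k := by
        constructor
        · intro h'; exact Nat.dvd_sub h' dvd_rfl
        · intro h'; have h2 := Nat.sub_add_cancel h; rw [← h2]; exact Nat.dvd_add h' dvd_rfl
      rw [if_pos h, if_neg (show ¬ n = 0 by omega)]
      by_cases hd : k ∣ n
      · rw [if_pos hd, if_pos (hiff.mp hd)]; ring
      · rw [if_neg hd, if_neg (show ¬ k ∣ n - k from fun h' => hd (hiff.mpr h'))]; ring
  have h2 : (1 - X ^ k : PowerSeries ℤ) * oneMinusXInv k = 1 := by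
    apply PowerSeries.mul_invOfUnit
    simp [hk.ne']
  have hne : (1 - X ^ k : PowerSeries ℤ) ≠ 0 := by
    intro h
    have := congrArg (constantCoeff (R := ℤ)) h
    simp [hk.ne'] at this
  exact (mul_left_cancel₀ hne (h2.trans key.symm))

open Finset.HasAntidiagonal

theorem partialGF_prop (α : Type*) [CommSemiring α] (n : ℕ) (s : Finset ℕ) (hs : ∀ i ∈ s, 0 < i)
    (c : ℕ → Set ℕ) (hc : ∀ i, i ∉ s → 0 ∈ c i) :
    #{p : n.Partition | (∀ j, p.parts.count j ∈ c j) ∧ ∀ j ∈ p.parts, j ∈ s} =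
      coeff (R := α) n (∏ i ∈ s, indicatorSeries α ((· * i) '' c i)) := by
  simp_rw [coeff_prod, coeff_indicator, prod_boole, sum_boole]
  apply congr_arg
  simp only [mem_univ, forall_true_left, not_and, not_forall, exists_prop,
    Set.mem_image, not_exists]
  set φ : (a : Nat.Partition n) →
    a ∈ filter (fun p ↦ (∀ (j : ℕ), Multiset.count j p.parts ∈ c j) ∧ ∀ j ∈ p.parts, j ∈ s) univ →
    ℕ →₀ ℕ := fun p _ => {
      toFun := fun i => Multiset.count i p.parts • i
      support := Finset.filter (fun i => i ≠ 0) p.parts.toFinset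
      mem_support_toFun := fun a => by
        simp only [smul_eq_mul, ne_eq, mul_eq_zero, Multiset.count_eq_zero]
        rw [not_or, not_not]
        simp only [Multiset.mem_toFinset, not_not, mem_filter] }
  refine Finset.card_bij φ ?_ ?_ ?_
  · intro a ha
    simp only [φ, not_forall, not_exists, not_and, exists_prop, mem_filter]
    rw [mem_finsuppAntidiag]
    dsimp only [ne_eq, smul_eq_mul, id_eq, eq_mpr_eq_cast, le_eq_subset, Finsupp.coe_mk]
    simp only [mem_univ, forall_true_left, not_and, not_forall, exists_prop,
      mem_filter, true_and] at ha
    refine ⟨⟨?_, fun i ↦ ?_⟩, fun i _ ↦ ⟨a.parts.count i, ha.1 i, rfl⟩⟩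
    · conv_rhs => simp [← a.parts_sum]
      rw [sum_multiset_count_of_subset _ s]
      · simp only [smul_eq_mul]
      · intro i
        simp only [Multiset.mem_toFinset, not_not, mem_filter]
        apply ha.2
    · simp only [ne_eq, Multiset.mem_toFinset, not_not, mem_filter, and_imp]
      exact fun hi _ ↦ ha.2 i hi
  · intro p₁ hp₁ p₂ hp₂ h
    apply Nat.Partition.ext
    simp only [true_and, mem_univ, mem_filter] at hp₁ hp₂
    ext i
    simp only [φ, ne_eq, Multiset.mem_toFinset, not_not, smul_eq_mul, Finsupp.mk.injEq] at h
    by_cases hi : i = 0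
    · rw [hi]
      rw [Multiset.count_eq_zero_of_notMem]
      · rw [Multiset.count_eq_zero_of_notMem]
        intro a; exact Nat.lt_irrefl 0 (hs 0 (hp₂.2 0 a))
      intro a; exact Nat.lt_irrefl 0 (hs 0 (hp₁.2 0 a))
    · rw [← mul_left_inj' hi]
      rw [funext_iff] at h
      exact h.2 i
  · simp only [φ, mem_filter, mem_finsuppAntidiag, mem_univ, exists_prop, true_and, and_assoc]
    rintro f ⟨hf, hf₃, hf₄⟩
    have hf' : f ∈ finsuppAntidiag s n := mem_finsuppAntidiag.mpr ⟨hf, hf₃⟩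
    simp only [mem_finsuppAntidiag] at hf'
    refine ⟨⟨∑ i ∈ s, Multiset.replicate (f i / i) i, ?_, ?_⟩, ?_, ?_, ?_⟩
    · intro i hi
      simp only [exists_prop, Multiset.mem_sum, mem_map, Function.Embedding.coeFn_mk] at hi
      rcases hi with ⟨t, ht, z⟩
      apply hs
      rwa [Multiset.eq_of_mem_replicate z]
    · simp_rw [Multiset.sum_sum, Multiset.sum_replicate, Nat.nsmul_eq_mul]
      rw [← hf'.1]
      refine sum_congr rfl fun i hi => Nat.div_mul_cancel ?_
      rcases hf₄ i hi with ⟨w, _, hw₂⟩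
      rw [← hw₂]
      exact dvd_mul_left _ _
    · intro i
      simp_rw [Multiset.count_sum', Multiset.count_replicate, sum_ite_eq']
      split_ifs with h
      · rcases hf₄ i h with ⟨w, hw₁, hw₂⟩
        rwa [← hw₂, Nat.mul_div_cancel _ (hs i h)]
      · exact hc _ h
    · intro i hi
      rw [Multiset.mem_sum] at hi
      rcases hi with ⟨j, hj₁, hj₂⟩
      rwa [Multiset.eq_of_mem_replicate hj₂]
    · ext i
      simp_rw [Multiset.count_sum', Multiset.count_replicate, sum_ite_eq']
      simp only [ne_eq, Multiset.mem_toFinset, not_not, smul_eq_mul, ite_mul,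
        zero_mul, Finsupp.coe_mk]
      split_ifs with h
      · apply Nat.div_mul_cancel
        rcases hf₄ i h with ⟨w, _, hw₂⟩
        apply Dvd.intro_left _ hw₂
      · apply symm
        rw [← Finsupp.notMem_support_iff]
        exact notMem_mono hf'.2 h


theorem coeff_prodInv (m : ℕ) (hm : 0 < m) (N : ℕ) :
    coeff (R := ℤ) N (∏ k ∈ Finset.Icc 1 m, oneMinusXInv k) =
      #(Finset.univ.filter fun p : Nat.Partition N => ∀ j ∈ p.parts, j ≤ m) := by
  have h := partialGF_prop ℤ N (Finset.Icc 1 m) (fun k hk => (Finset.mem_Icc.mp hk).1)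
    (fun _ => Set.univ) (fun _ _ => trivial)
  have hprod : ∏ k ∈ Finset.Icc 1 m, oneMinusXInv k =
      ∏ i ∈ Finset.Icc 1 m, indicatorSeries ℤ ((· * i) '' (fun _ => Set.univ) i) := by
    apply Finset.prod_congr rfl
    intro k hk
    rw [oneMinusXInv_eq k (Finset.mem_Icc.mp hk).1]
    have hset : {j | k ∣ j} = ((fun x => x * k) '' Set.univ) := by
      ext j
      simp only [Set.mem_image, Set.mem_univ, true_and, Set.mem_setOf_eq]
      constructor
      · rintro ⟨a, rfl⟩; exact ⟨a, mul_comm a k⟩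
      · rintro ⟨a, rfl⟩; exact dvd_mul_left k a
    rw [hset]
  rw [hprod, ← h]
  congr 1
  apply congrArg
  apply Finset.filter_congr
  intro p _
  simp only [Set.mem_univ, true_and, forall_const, Finset.mem_Icc]
  constructor
  · intro h j hj; exact (h j hj).2
  · intro h j hj; exact ⟨p.parts_pos hj, h j hj⟩

noncomputable def cntP (m N : ℕ) : ℕ :=
  #(Finset.univ.filter fun p : Nat.Partition N => ∀ j ∈ p.parts, j ≤ m)

theorem coeff_full (m : ℕ) (hm : 0 < m) (n : ℕ) :
    coeff (R := ℤ) n (X ^ (m ^ 2) * ∏ k ∈ Finset.Icc 1 m, (oneMinusXInv k) ^ 2) =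
      if m ^ 2 ≤ n then
        ((∑ ab ∈ Finset.HasAntidiagonal.antidiagonal (n - m ^ 2), cntP m ab.1 * cntP m ab.2 : ℕ) : ℤ)
      else 0 := by
  rw [Finset.prod_pow, mul_comm, PowerSeries.coeff_mul_X_pow']
  split_ifs with h
  · rw [sq (∏ k ∈ Finset.Icc 1 m, oneMinusXInv k), PowerSeries.coeff_mul]
    push_cast
    apply Finset.sum_congr rfl
    intro ab hab
    rw [coeff_prodInv m hm, coeff_prodInv m hm]
    rfl
  · rfl

/-! ### Multiset toolkit: counting parts of size at least `v` -/

/-- number of elements of `s` that are `≥ v` -/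
def nge (s : Multiset ℕ) (v : ℕ) : ℕ := (s.filter fun p => v ≤ p).card

theorem nge_anti (s : Multiset ℕ) {v w : ℕ} (h : v ≤ w) : nge s w ≤ nge s v :=
  Multiset.card_le_card (Multiset.monotone_filter_right s (fun p hp => le_trans h hp))

theorem nge_add (s t : Multiset ℕ) (v : ℕ) : nge (s + t) v = nge s v + nge t v := by
  simp [nge, Multiset.filter_add]

theorem nge_replicate (c x v : ℕ) :
    nge (Multiset.replicate c x) v = if v ≤ x then c else 0 := by
  induction c with
  | zero => simp [nge]
  | succ c ih =>
    rw [Multiset.replicate_succ]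
    simp only [nge, Multiset.filter_cons] at ih ⊢
    split_ifs with h <;> simp_all [nge]

theorem nge_count (s : Multiset ℕ) (v : ℕ) :
    nge s v = Multiset.count v s + nge s (v + 1) := by
  have h := Multiset.filter_add_filter (fun p => v + 1 ≤ p) (fun p => p = v) s
  have h1 : (s.filter fun p => v + 1 ≤ p ∨ p = v) = s.filter fun p => v ≤ p := by
    apply Multiset.filter_congr; intro p _; constructor <;> (intro h; omega)
  have h2 : (s.filter fun p => v + 1 ≤ p ∧ p = v) = 0 := by
    rw [Multiset.filter_eq_nil]; intro p _ hp; omega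
  rw [h1, h2, add_zero] at h
  have h3 : (s.filter fun p => p = v).card = Multiset.count v s := by
    rw [Multiset.count_eq_card_filter_eq]
    congr 1
    apply Multiset.filter_congr; intro p _; constructor <;> (intro h; omega)
  have := congrArg Multiset.card h
  rw [Multiset.card_add, h3] at this
  simp only [nge]
  omega

theorem nge_ext {s t : Multiset ℕ} (hs : ∀ p ∈ s, 0 < p) (ht : ∀ p ∈ t, 0 < p)
    (h : ∀ v, 1 ≤ v → nge s v = nge t v) : s = t := by
  ext v
  rcases Nat.eq_zero_or_pos v with rfl | hv
  · rw [Multiset.count_eq_zero_of_notMem (fun hc => absurd (hs 0 hc) (by omega)),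
      Multiset.count_eq_zero_of_notMem (fun hc => absurd (ht 0 hc) (by omega))]
  · have e1 := nge_count s v
    have e2 := nge_count t v
    have := h v hv
    have := h (v + 1) (by omega)
    omega

theorem sum_nge (B : ℕ) (s : Multiset ℕ) (hs : ∀ p ∈ s, p ≤ B) :
    s.sum = ∑ v ∈ Finset.Icc 1 B, nge s v := by
  induction s using Multiset.induction with
  | empty => simp [nge]
  | cons a s ih =>
    have ha : a ≤ B := hs a (Multiset.mem_cons_self a s)
    have hs' : ∀ p ∈ s, p ≤ B := fun p hp => hs p (Multiset.mem_cons_of_mem hp)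
    have hcons : ∀ v, nge (a ::ₘ s) v = nge s v + if v ≤ a then 1 else 0 := by
      intro v
      simp only [nge, Multiset.filter_cons]
      split_ifs <;> simp [add_comm]
    have hfil : (Finset.Icc 1 B).filter (fun v => v ≤ a) = Finset.Icc 1 a := by
      ext v; simp only [Finset.mem_Icc, Finset.mem_filter]; omega
    have hsum : ∑ v ∈ Finset.Icc 1 B, (if v ≤ a then 1 else 0) = a := by
      rw [Finset.sum_ite, hfil, Finset.sum_const, Finset.sum_const_zero, add_zero,
        Nat.card_Icc, smul_eq_mul, mul_one]
      omega
    rw [Multiset.sum_cons, ih hs', Finset.sum_congr rfl (fun v _ => hcons v),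
      Finset.sum_add_distrib, hsum, add_comm]

theorem nge_eq_zero {s : Multiset ℕ} {v : ℕ} (h : ∀ p ∈ s, p < v) : nge s v = 0 := by
  simp only [nge, Multiset.card_eq_zero, Multiset.filter_eq_nil]
  intro p hp
  exact fun hc => absurd (h p hp) (by omega)

theorem nge_split {s : Multiset ℕ} {v m : ℕ} (h : v ≤ m) :
    nge (s.filter fun p => p < m) v + nge s m = nge s v := by
  have hf := Multiset.filter_add_filter (fun p => v ≤ p ∧ p < m) (fun p => m ≤ p) s
  have h1 : (s.filter fun p => (v ≤ p ∧ p < m) ∨ m ≤ p) = s.filter fun p => v ≤ p := by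
    apply Multiset.filter_congr; intro p _; constructor <;> (intro h'; omega)
  have h2 : (s.filter fun p => (v ≤ p ∧ p < m) ∧ m ≤ p) = 0 := by
    rw [Multiset.filter_eq_nil]; intro p _ hp; omega
  rw [h1, h2, add_zero] at hf
  have h3 : ((s.filter fun p => p < m).filter fun p => v ≤ p)
      = s.filter fun p => v ≤ p ∧ p < m := by
    rw [Multiset.filter_filter]
  have := congrArg Multiset.card hf
  rw [Multiset.card_add] at this
  simp only [nge, h3]
  omega
theorem nge_map_range (K : ℕ) (f : ℕ → ℕ) (v : ℕ) :
    nge ((Multiset.range K).map f) v = #((Finset.range K).filter fun j => v ≤ f j) := by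
  simp only [nge, Multiset.filter_map, Multiset.card_map]
  rfl

theorem nge_filter_pos (s : Multiset ℕ) {v : ℕ} (hv : 1 ≤ v) :
    nge (s.filter fun x => 0 < x) v = nge s v := by
  simp only [nge, Multiset.filter_filter]
  congr 1
  apply Multiset.filter_congr
  intro p _
  constructor
  · intro h; exact h.1
  · intro h; exact ⟨h, by omega⟩

theorem card_filter_range_le_iff {f : ℕ → ℕ} (hf : ∀ i j, i ≤ j → f j ≤ f i)
    {K j0 : ℕ} (hj0 : j0 < K) (v : ℕ) :
    j0 + 1 ≤ #((Finset.range K).filter fun j => v ≤ f j) ↔ v ≤ f j0 := by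
  constructor
  · intro h
    by_contra hc
    have hsub : ((Finset.range K).filter fun j => v ≤ f j) ⊆ Finset.range j0 := by
      intro j hj
      rw [Finset.mem_filter, Finset.mem_range] at hj
      rw [Finset.mem_range]
      by_contra hc2
      exact hc (le_trans hj.2 (hf j0 j (by omega)))
    have := Finset.card_le_card hsub
    rw [Finset.card_range] at this
    omega
  · intro h
    have hsub : Finset.range (j0 + 1) ⊆ (Finset.range K).filter fun j => v ≤ f j := by
      intro j hj
      rw [Finset.mem_range] at hj
      rw [Finset.mem_filter, Finset.mem_range]
      exact ⟨by omega, le_trans h (hf j j0 (by omega))⟩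
    have := Finset.card_le_card hsub
    rwa [Finset.card_range] at this

theorem card_filter_range_lt (K c : ℕ) :
    #((Finset.range K).filter fun j => j + 1 ≤ c) = min c K := by
  have : ((Finset.range K).filter fun j => j + 1 ≤ c) = Finset.range (min c K) := by
    ext j
    simp only [Finset.mem_filter, Finset.mem_range, lt_min_iff]
    omega
  rw [this, Finset.card_range]

theorem sum_filter_pos (s : Multiset ℕ) : (s.filter fun x => 0 < x).sum = s.sum := by
  have h0 : (s.filter fun x => ¬ 0 < x).sum = 0 :=
    Multiset.sum_eq_zero (fun x hx => by rw [Multiset.mem_filter] at hx; omega)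
  conv_rhs => rw [← Multiset.filter_add_not (fun x => 0 < x) s]
  rw [Multiset.sum_add, h0, add_zero]

theorem card_le_sum_of_pos {s : Multiset ℕ} (h : ∀ p ∈ s, 0 < p) : s.card ≤ s.sum := by
  induction s using Multiset.induction with
  | empty => simp
  | cons a s ih =>
    rw [Multiset.card_cons, Multiset.sum_cons]
    have := h a (Multiset.mem_cons_self a s)
    have := ih (fun p hp => h p (Multiset.mem_cons_of_mem hp))
    omega

theorem sum_Icc_one_eq (m : ℕ) (g : ℕ → ℕ) :
    ∑ v ∈ Finset.Icc 1 m, g v = ∑ i ∈ Finset.range m, g (i + 1) := by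
  rw [show Finset.Icc 1 m = Finset.Ico 1 (m + 1) by rw [Finset.Ico_add_one_right_eq_Icc],
    Finset.sum_Ico_eq_sum_range]
  simp [add_comm]

theorem sum_Icc_shift_eq (m n : ℕ) (g : ℕ → ℕ) :
    ∑ v ∈ Finset.Icc (m + 1) (m + n), g v = ∑ j ∈ Finset.range n, g (m + j + 1) := by
  rw [show Finset.Icc (m + 1) (m + n) = Finset.Ico (m + 1) (m + n + 1) by
      rw [Finset.Ico_add_one_right_eq_Icc],
    Finset.sum_Ico_eq_sum_range]
  have : m + n + 1 - (m + 1) = n := by omega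
  rw [this]
  apply Finset.sum_congr rfl
  intro j _
  congr 1
  omega
/-! ### The Durfee decomposition -/

/-- Columns of the part of a partition to the right of its `m × m` Durfee square. -/
noncomputable def durfA (m n : ℕ) (s : Multiset ℕ) : Multiset ℕ :=
  ((Multiset.range n).map fun j => nge s (m + j + 1)).filter fun x => 0 < x

/-- Rows of a partition below its `m × m` Durfee square. -/
noncomputable def durfB (m : ℕ) (s : Multiset ℕ) : Multiset ℕ :=
  (s.filter fun p => p < m) + Multiset.replicate (nge s m - m) m

/-- Reconstruction of a partition from its Durfee square and the two small partitions. -/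
noncomputable def durfR (m : ℕ) (A B : Multiset ℕ) : Multiset ℕ :=
  ((Multiset.range m).map fun i => m + nge A (i + 1)) + B

theorem durfA_mem {m n : ℕ} {s : Multiset ℕ} {q : ℕ} (hq : q ∈ durfA m n s) :
    0 < q ∧ q ≤ nge s (m + 1) := by
  rw [durfA, Multiset.mem_filter] at hq
  obtain ⟨hq1, hq2⟩ := hq
  refine ⟨hq2, ?_⟩
  rw [Multiset.mem_map] at hq1
  obtain ⟨j, _, rfl⟩ := hq1
  exact nge_anti s (by omega)

theorem durfB_mem {m : ℕ} (hm : 0 < m) {s : Multiset ℕ} (hs : ∀ p ∈ s, 0 < p) {q : ℕ}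
    (hq : q ∈ durfB m s) : 0 < q ∧ q ≤ m := by
  rw [durfB, Multiset.mem_add] at hq
  rcases hq with hq | hq
  · rw [Multiset.mem_filter] at hq
    exact ⟨hs q hq.1, by omega⟩
  · rw [Multiset.eq_of_mem_replicate hq]
    exact ⟨hm, le_rfl⟩

theorem nge_durfA {m n : ℕ} (s : Multiset ℕ) {v : ℕ} (hv : 1 ≤ v) :
    nge (durfA m n s) v = #((Finset.range n).filter fun j => v ≤ nge s (m + j + 1)) := by
  rw [durfA, nge_filter_pos _ hv, nge_map_range]

theorem nge_durfB {m : ℕ} (s : Multiset ℕ) {v : ℕ} (hv : v ≤ m) (hD : m ≤ nge s m) :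
    nge (durfB m s) v + m = nge s v := by
  rw [durfB, nge_add, nge_replicate, if_pos hv]
  have := nge_split (s := s) hv
  omega

theorem nge_durfB_zero {m : ℕ} (s : Multiset ℕ) {v : ℕ} (hv : m + 1 ≤ v) :
    nge (durfB m s) v = 0 := by
  apply nge_eq_zero
  intro p hp
  rw [durfB, Multiset.mem_add] at hp
  rcases hp with hp | hp
  · rw [Multiset.mem_filter] at hp; omega
  · rw [Multiset.eq_of_mem_replicate hp]; omega

theorem sum_durfA {m n : ℕ} (s : Multiset ℕ) :
    (durfA m n s).sum = ∑ j ∈ Finset.range n, nge s (m + j + 1) := by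
  rw [durfA, sum_filter_pos]
  rw [Finset.sum]
  rfl

theorem nge_durfR (m : ℕ) (A B : Multiset ℕ) (w : ℕ) :
    nge (durfR m A B) w =
      #((Finset.range m).filter fun i => w ≤ m + nge A (i + 1)) + nge B w := by
  rw [durfR, nge_add, nge_map_range]

theorem nge_durfR_high {m : ℕ} {A B : Multiset ℕ} (hB : ∀ q ∈ B, q ≤ m) (j : ℕ) :
    nge (durfR m A B) (m + j + 1) =
      #((Finset.range m).filter fun i => j + 1 ≤ nge A (i + 1)) := by
  rw [nge_durfR, nge_eq_zero (fun p hp => by have := hB p hp; omega), add_zero]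
  congr 1
  apply Finset.filter_congr
  intro i _
  constructor <;> (intro h; omega)

theorem nge_durfR_low {m : ℕ} (A B : Multiset ℕ) {w : ℕ} (hw : w ≤ m) :
    nge (durfR m A B) w = m + nge B w := by
  rw [nge_durfR]
  congr 1
  rw [Finset.filter_true_of_mem, Finset.card_range]
  intro i _
  omega

theorem durfR_pos {m : ℕ} (hm : 0 < m) {A B : Multiset ℕ} (hB : ∀ q ∈ B, 0 < q) :
    ∀ q ∈ durfR m A B, 0 < q := by
  intro q hq
  rw [durfR, Multiset.mem_add] at hq
  rcases hq with hq | hq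
  · rw [Multiset.mem_map] at hq
    obtain ⟨i, _, rfl⟩ := hq
    omega
  · exact hB q hq

theorem sum_durfR {m : ℕ} {A B : Multiset ℕ} (hA : ∀ q ∈ A, q ≤ m) :
    (durfR m A B).sum = m * m + A.sum + B.sum := by
  rw [durfR, Multiset.sum_add]
  have h1 : (((Multiset.range m).map fun i => m + nge A (i + 1))).sum
      = ∑ i ∈ Finset.range m, (m + nge A (i + 1)) := by
    rw [Finset.sum]; rfl
  rw [h1, Finset.sum_add_distrib, Finset.sum_const, Finset.card_range, smul_eq_mul, mul_comm m m,
    ← sum_Icc_one_eq, ← sum_nge m A hA]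

theorem nge_le_card (s : Multiset ℕ) (v : ℕ) : nge s v ≤ s.card :=
  Multiset.card_le_card (Multiset.filter_le _ s)

/-- the total sum identity for a partition-like multiset -/
theorem sum_split (m n : ℕ) (s : Multiset ℕ) (hsum : s.sum = n) :
    n = ∑ v ∈ Finset.Icc 1 m, nge s v + ∑ j ∈ Finset.range n, nge s (m + j + 1) := by
  have hle : ∀ p ∈ s, p ≤ m + n := by
    intro p hp
    have : p ≤ s.sum := Multiset.single_le_sum (fun _ _ => Nat.zero_le _) p hp
    omega
  have h := sum_nge (m + n) s hle
  rw [hsum] at h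
  rw [← sum_Icc_shift_eq]
  rw [show Finset.Icc 1 m = Finset.Ico 1 (m + 1) by rw [Finset.Ico_add_one_right_eq_Icc],
    show Finset.Icc (m + 1) (m + n) = Finset.Ico (m + 1) (m + n + 1) by rw [Finset.Ico_add_one_right_eq_Icc],
    Finset.sum_Ico_consecutive _ (by omega) (by omega),
    show Finset.Ico 1 (m + n + 1) = Finset.Icc 1 (m + n) by rw [Finset.Ico_add_one_right_eq_Icc]]
  exact h
theorem hasDurfeeSide_iff {n : ℕ} (P : Nat.Partition n) (d : ℕ) :
    HasDurfeeSide P d ↔ d ≤ nge P.parts d ∧ nge P.parts (d + 1) ≤ d := by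
  unfold HasDurfeeSide nge
  omega

theorem durfR_roundtrip {m n : ℕ} (hm : 0 < m) (s : Multiset ℕ) (hpos : ∀ p ∈ s, 0 < p)
    (hsum : s.sum = n) (hD1 : m ≤ nge s m) (hD2 : nge s (m + 1) ≤ m) :
    durfR m (durfA m n s) (durfB m s) = s := by
  apply nge_ext (durfR_pos hm (fun q hq => (durfB_mem hm hpos hq).1)) hpos
  intro v hv
  rcases le_or_gt v m with hvm | hvm
  · rw [nge_durfR_low _ _ hvm]
    have := nge_durfB s hvm hD1
    omega
  · obtain ⟨j0, rfl⟩ : ∃ j0, v = m + j0 + 1 := ⟨v - m - 1, by omega⟩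
    rw [nge_durfR_high (fun q hq => (durfB_mem hm hpos hq).2) j0]
    have hAcomp : ∀ i : ℕ, nge (durfA m n s) (i + 1)
        = #((Finset.range n).filter fun j => i + 1 ≤ nge s (m + j + 1)) :=
      fun i => nge_durfA s (by omega)
    rcases lt_or_ge j0 n with hj0 | hj0
    · have hiff : ∀ i : ℕ,
          (j0 + 1 ≤ nge (durfA m n s) (i + 1)) ↔ (i + 1 ≤ nge s (m + j0 + 1)) := by
        intro i
        rw [hAcomp i]
        exact card_filter_range_le_iff (fun a b hab => nge_anti s (by omega)) hj0 (i + 1)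
      rw [Finset.filter_congr (fun i _ => hiff i), card_filter_range_lt]
      have := le_trans (nge_anti s (show m + 1 ≤ m + j0 + 1 by omega)) hD2
      omega
    · have hzero : nge s (m + j0 + 1) = 0 := nge_eq_zero (fun p hp => by
        have : p ≤ s.sum := Multiset.single_le_sum (fun _ _ => Nat.zero_le _) p hp
        omega)
      rw [hzero, Finset.filter_false_of_mem, Finset.card_empty]
      intro i _
      rw [hAcomp i]
      have : #((Finset.range n).filter fun j => i + 1 ≤ nge s (m + j + 1)) ≤ n :=
        le_trans (Finset.card_le_card (Finset.filter_subset _ _)) (le_of_eq (Finset.card_range n))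
      omega

theorem durfB_roundtrip {m : ℕ} (hm : 0 < m) {A B : Multiset ℕ}
    (hB : ∀ q ∈ B, 0 < q ∧ q ≤ m) : durfB m (durfR m A B) = B := by
  rw [durfB]
  have h1 : (durfR m A B).filter (fun p => p < m) = B.filter (fun p => p < m) := by
    rw [durfR, Multiset.filter_add, Multiset.filter_eq_nil.mpr, zero_add]
    intro a ha
    rw [Multiset.mem_map] at ha
    obtain ⟨i, _, rfl⟩ := ha
    omega
  have h2 : nge (durfR m A B) m = m + nge B m := nge_durfR_low A B le_rfl
  have h3 : m + nge B m - m = nge B m := by omega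
  rw [h1, h2, h3]
  have h5 : B.filter (fun p => ¬ p < m) = B.filter (fun p => m ≤ p) :=
    Multiset.filter_congr (fun p _ => by constructor <;> (intro h; omega))
  have h4 : B.filter (fun p => ¬ p < m) = Multiset.replicate (nge B m) m := by
    rw [h5]
    exact Multiset.eq_replicate_card.mpr (fun b hb => by
      rw [Multiset.mem_filter] at hb
      have := (hB b hb.1).2
      omega)
  rw [← h4, Multiset.filter_add_not]

theorem durfA_roundtrip {m n : ℕ} (hm : 0 < m) {A B : Multiset ℕ}
    (hA : ∀ q ∈ A, 0 < q ∧ q ≤ m) (hB : ∀ q ∈ B, 0 < q ∧ q ≤ m) (hAn : A.card ≤ n) :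
    durfA m n (durfR m A B) = A := by
  apply nge_ext (fun q hq => (durfA_mem hq).1) (fun p hp => (hA p hp).1)
  intro v hv
  rw [nge_durfA _ hv]
  have hR : ∀ j : ℕ, nge (durfR m A B) (m + j + 1)
      = #((Finset.range m).filter fun i => j + 1 ≤ nge A (i + 1)) :=
    fun j => nge_durfR_high (fun q hq => (hB q hq).2) j
  rcases le_or_gt v m with hvm | hvm
  · have hiff : ∀ j : ℕ, (v ≤ nge (durfR m A B) (m + j + 1)) ↔ (j + 1 ≤ nge A v) := by
      intro j
      rw [hR j]
      have h := card_filter_range_le_iff (f := fun i => nge A (i + 1))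
        (fun a b hab => nge_anti A (by omega)) (show v - 1 < m by omega) (j + 1)
      have hv' : v - 1 + 1 = v := by omega
      rw [hv'] at h
      exact h
    rw [Finset.filter_congr (fun j _ => hiff j), card_filter_range_lt]
    have := le_trans (nge_le_card A v) hAn
    omega
  · have h0 : nge A v = 0 := nge_eq_zero (fun p hp => by have := (hA p hp).2; omega)
    rw [h0, Finset.filter_false_of_mem, Finset.card_empty]
    intro j _
    rw [hR j]
    have : #((Finset.range m).filter fun i => j + 1 ≤ nge A (i + 1)) ≤ m :=
      le_trans (Finset.card_le_card (Finset.filter_subset _ _)) (le_of_eq (Finset.card_range m))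
    omega

theorem durfR_durfee {m : ℕ} {A B : Multiset ℕ} (hB : ∀ q ∈ B, q ≤ m) :
    m ≤ nge (durfR m A B) m ∧ nge (durfR m A B) (m + 1) ≤ m := by
  constructor
  · rw [nge_durfR_low A B le_rfl]; omega
  · rw [show m + 1 = m + 0 + 1 by omega, nge_durfR_high hB 0]
    exact le_trans (Finset.card_le_card (Finset.filter_subset _ _)) (le_of_eq (Finset.card_range m))

theorem sum_durf {m n : ℕ} (hm : 0 < m) (s : Multiset ℕ) (hpos : ∀ p ∈ s, 0 < p)
    (hsum : s.sum = n) (hD1 : m ≤ nge s m) :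
    (durfA m n s).sum + (durfB m s).sum + m * m = n := by
  have hBsum : (durfB m s).sum = ∑ v ∈ Finset.Icc 1 m, nge (durfB m s) v :=
    sum_nge m _ (fun p hp => (durfB_mem hm hpos hp).2)
  have hkey : ∑ v ∈ Finset.Icc 1 m, nge (durfB m s) v + m * m
      = ∑ v ∈ Finset.Icc 1 m, nge s v := by
    rw [sum_Icc_one_eq m (nge (durfB m s)), sum_Icc_one_eq m (nge s),
      show m * m = ∑ _i ∈ Finset.range m, m by rw [Finset.sum_const, Finset.card_range, smul_eq_mul],
      ← Finset.sum_add_distrib]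
    apply Finset.sum_congr rfl
    intro i hi
    rw [Finset.mem_range] at hi
    exact nge_durfB s (by omega) hD1
  have hsplit := sum_split m n s hsum
  have hA := sum_durfA (m := m) (n := n) s
  omega
theorem sigma_part_ext {x y : Σ ab : ℕ × ℕ, Nat.Partition ab.1 × Nat.Partition ab.2}
    (h1 : x.2.1.parts = y.2.1.parts) (h2 : x.2.2.parts = y.2.2.parts) : x = y := by
  obtain ⟨⟨a, b⟩, A, B⟩ := x
  obtain ⟨⟨c, d⟩, C, D⟩ := y
  simp only at h1 h2
  have hac : a = c := by
    have h := congrArg Multiset.sum h1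
    rw [A.parts_sum, C.parts_sum] at h
    exact h
  have hbd : b = d := by
    have h := congrArg Multiset.sum h2
    rw [B.parts_sum, D.parts_sum] at h
    exact h
  subst hac; subst hbd
  exact congrArg (Sigma.mk (a, b)) (Prod.ext (Nat.Partition.ext h1) (Nat.Partition.ext h2))

theorem card_mul_le_sum {s : Multiset ℕ} {c : ℕ} (h : ∀ p ∈ s, c ≤ p) :
    s.card * c ≤ s.sum := by
  induction s using Multiset.induction with
  | empty => simp
  | cons a s ih =>
    rw [Multiset.card_cons, Multiset.sum_cons, add_mul, one_mul]
    have := h a (Multiset.mem_cons_self a s)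
    have := ih (fun p hp => h p (Multiset.mem_cons_of_mem hp))
    omega

theorem durfee_empty (m n : ℕ) (hm : 0 < m) (h : n < m ^ 2) :
    #(Finset.univ.filter fun P : Nat.Partition n => HasDurfeeSide P m) = 0 := by
  rw [Finset.card_eq_zero, Finset.filter_eq_empty_iff]
  intro P _
  rw [hasDurfeeSide_iff]
  rintro ⟨hD1, -⟩
  have h1 : (P.parts.filter fun p => m ≤ p).sum ≤ P.parts.sum := by
    conv_rhs => rw [← Multiset.filter_add_not (fun p => m ≤ p) P.parts]
    rw [Multiset.sum_add]
    omega
  have h2 : (P.parts.filter fun p => m ≤ p).card * m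
      ≤ (P.parts.filter fun p => m ≤ p).sum :=
    card_mul_le_sum (fun p hp => (Multiset.mem_filter.mp hp).2)
  have h3 : m * m ≤ (P.parts.filter fun p => m ≤ p).card * m :=
    Nat.mul_le_mul_right m hD1
  have h4 := P.parts_sum
  have h5 : m ^ 2 = m * m := pow_two m
  unfold nge at hD1
  omega

theorem card_durfee_eq (m n : ℕ) (hm : 0 < m) (hmn : m ^ 2 ≤ n) :
    #(Finset.univ.filter fun P : Nat.Partition n => HasDurfeeSide P m)
      = ∑ ab ∈ Finset.HasAntidiagonal.antidiagonal (n - m ^ 2), cntP m ab.1 * cntP m ab.2 := by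
  have hsq : m ^ 2 = m * m := pow_two m
  have hcnt : ∀ ab ∈ Finset.HasAntidiagonal.antidiagonal (n - m ^ 2), cntP m ab.1 * cntP m ab.2 =
      #((Finset.univ.filter fun p : Nat.Partition ab.1 => ∀ j ∈ p.parts, j ≤ m) ×ˢ
        (Finset.univ.filter fun p : Nat.Partition ab.2 => ∀ j ∈ p.parts, j ≤ m)) := by
    intro ab _
    rw [Finset.card_product]
    rfl
  rw [Finset.sum_congr rfl hcnt, ← Finset.card_sigma]
  refine Finset.card_bij'
    (fun P hP =>
      ⟨((durfA m n P.parts).sum, (durfB m P.parts).sum),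
        ⟨⟨durfA m n P.parts, fun {q} hq => (durfA_mem hq).1, rfl⟩,
         ⟨durfB m P.parts, fun {q} hq => (durfB_mem hm (fun p hp => P.parts_pos hp) hq).1,
           rfl⟩⟩⟩)
    (fun x hx => by
      refine ⟨durfR m x.2.1.parts x.2.2.parts, fun {q} hq => ?_, ?_⟩
      · rw [Finset.mem_sigma, Finset.mem_product, Finset.mem_filter, Finset.mem_filter] at hx
        exact durfR_pos hm (fun q' hq' => x.2.2.parts_pos hq') q hq
      · rw [Finset.mem_sigma, Finset.mem_product, Finset.mem_filter, Finset.mem_filter,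
          Finset.HasAntidiagonal.mem_antidiagonal] at hx
        rw [sum_durfR (fun q hq' => hx.2.1.2 q hq'), x.2.1.parts_sum, x.2.2.parts_sum]
        omega)
    ?_ ?_ ?_ ?_
  · -- hi : forward map lands in the sigma set
    intro P hP
    dsimp only
    rw [Finset.mem_filter, hasDurfeeSide_iff] at hP
    obtain ⟨-, hD1, hD2⟩ := hP
    rw [Finset.mem_sigma, Finset.mem_product, Finset.HasAntidiagonal.mem_antidiagonal]
    refine ⟨?_, ?_, ?_⟩
    · show (durfA m n P.parts).sum + (durfB m P.parts).sum = n - m ^ 2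
      have := sum_durf hm P.parts (fun p hp => P.parts_pos hp) P.parts_sum hD1
      omega
    · rw [Finset.mem_filter]
      exact ⟨Finset.mem_univ _, fun j hj => le_trans (durfA_mem hj).2 hD2⟩
    · rw [Finset.mem_filter]
      exact ⟨Finset.mem_univ _,
        fun j hj => (durfB_mem hm (fun p hp => P.parts_pos hp) hj).2⟩
  · -- hj : backward map lands in the Durfee set
    intro x hx
    rw [Finset.mem_sigma, Finset.mem_product, Finset.mem_filter, Finset.mem_filter] at hx
    rw [Finset.mem_filter, hasDurfeeSide_iff]
    have := durfR_durfee (A := x.2.1.parts) (fun q hq => hx.2.2.2 q hq)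
    exact ⟨Finset.mem_univ _, this.1, this.2⟩
  · -- left inverse
    intro P hP
    rw [Finset.mem_filter, hasDurfeeSide_iff] at hP
    obtain ⟨-, hD1, hD2⟩ := hP
    apply Nat.Partition.ext
    exact durfR_roundtrip hm P.parts (fun p hp => P.parts_pos hp) P.parts_sum hD1 hD2
  · -- right inverse
    intro x hx
    rw [Finset.mem_sigma, Finset.mem_product, Finset.mem_filter, Finset.mem_filter,
      Finset.HasAntidiagonal.mem_antidiagonal] at hx
    have hA : ∀ q ∈ x.2.1.parts, 0 < q ∧ q ≤ m :=
      fun q hq => ⟨x.2.1.parts_pos hq, hx.2.1.2 q hq⟩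
    have hB : ∀ q ∈ x.2.2.parts, 0 < q ∧ q ≤ m :=
      fun q hq => ⟨x.2.2.parts_pos hq, hx.2.2.2 q hq⟩
    have hAn : x.2.1.parts.card ≤ n := by
      have h1 := card_le_sum_of_pos (fun p hp => (hA p hp).1)
      have h2 := x.2.1.parts_sum
      omega
    apply sigma_part_ext
    · exact durfA_roundtrip hm hA hB hAn
    · exact durfB_roundtrip hm hB


theorem coeff_durfeeTerm_eq_card_partitions_durfee (m : ℕ) (hm : 0 < m) (n : ℕ) :
    (PowerSeries.coeff (R := ℤ) n)
        (PowerSeries.X ^ (m ^ 2) * ∏ k ∈ Finset.Icc 1 m, (oneMinusXInv k) ^ 2) =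
      (Finset.univ.filter fun P : Nat.Partition n => HasDurfeeSide P m).card := by
  rw [coeff_full m hm n]
  by_cases h : m ^ 2 ≤ n
  · rw [if_pos h, card_durfee_eq m n hm h]
  · rw [if_neg h, durfee_empty m n hm (by omega)]
    simp
end
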